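/- arXiv:2306.06648 — 2 statements merged into one kernel-verified Lean document; each statement's English description precedes it below -/
import Mathlib

section
/- Cardinality bound for the auxiliary random variable. Fix finite alphabets 𝒳, 𝒮, 𝒴, 𝒵, a state pmf P_S, and a channel law P_{YZ|XS}, with joint law (S, U, X, Y, Z) ~ P_{UX} · P_S · P_{YZ|XS}. For every finite alphabet 𝒰 and pmf P_{UX} on 𝒰 × 𝒳, there exist an alphabet 𝒰' with |𝒰'| ≤ |𝒳| + 1 and a pmf P_{U'X} on 𝒰' × 𝒳 whose 𝒳-marginal equals that of P_{UX}, such that under the corresponding joint laws I(U'; Z) = I(U; Z) and I(X; Y | U', S) = I(X; Y | U, S) (and I(X; Y | S) is unchanged); consequently the rate region {(R0, R1) : R0 ≤ I(U; Z), R1 ≤ I(X; Y | U, S), R0 + R1 ≤ I(X; Y | S)} is the same for (U, X) and (U', X). -/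
open scoped BigOperators
open Filter

noncomputable section

/-- A probability mass function on a finite alphabet. -/
def IsPMF {α : Type*} [Fintype α] (p : α → ℝ) : Prop :=
  (∀ a, 0 ≤ p a) ∧ ∑ a, p a = 1

/-- A joint probability mass function on a pair of finite alphabets. -/
def IsPMF2 {α β : Type*} [Fintype α] [Fintype β] (p : α → β → ℝ) : Prop :=
  (∀ a b, 0 ≤ p a b) ∧ ∑ a, ∑ b, p a b = 1

/-- A transition kernel (channel) with a single input. -/
def IsChan1 {α γ : Type*} [Fintype γ] (W : α → γ → ℝ) : Prop :=
  ∀ a, (∀ c, 0 ≤ W a c) ∧ ∑ c, W a c = 1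

/-- A transition kernel (channel) with two inputs. -/
def IsChan2 {α β γ : Type*} [Fintype γ] (W : α → β → γ → ℝ) : Prop :=
  ∀ a b, (∀ c, 0 ≤ W a b c) ∧ ∑ c, W a b c = 1

/-- Mutual information `I(A;B)` (in bits, i.e. logarithm base 2) of a joint pmf `p`. -/
def MI {A B : Type*} [Fintype A] [Fintype B] (p : A → B → ℝ) : ℝ :=
  ∑ a, ∑ b,
    if p a b = 0 then 0
    else p a b * Real.logb 2 (p a b / ((∑ b', p a b') * (∑ a', p a' b)))

/-- Conditional mutual information `I(A;B|C)` (in bits) of a joint pmf `p c a b`. -/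
def CMI {C A B : Type*} [Fintype C] [Fintype A] [Fintype B] (p : C → A → B → ℝ) : ℝ :=
  ∑ c, ∑ a, ∑ b,
    if p c a b = 0 then 0
    else p c a b * Real.logb 2
      ((∑ a', ∑ b', p c a' b') * p c a b / ((∑ b', p c a b') * (∑ a', p c a' b)))

section Rates

variable {U 𝓧 𝓢 𝓨 𝓩 : Type*} [Fintype U] [Fintype 𝓧] [Fintype 𝓢] [Fintype 𝓨] [Fintype 𝓩]

/-- `I(U;Z)` under the joint law `(S,U,X,Y,Z) ~ P_{UX}·P_S·P_{YZ|XS}`. -/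
def rateIUZ (pUX : U → 𝓧 → ℝ) (pS : 𝓢 → ℝ) (W : 𝓧 → 𝓢 → 𝓨 × 𝓩 → ℝ) : ℝ :=
  MI (fun (u : U) (z : 𝓩) => ∑ s, ∑ x, ∑ y, pUX u x * pS s * W x s (y, z))

/-- `I(X;Y|U,S)` under the joint law `(S,U,X,Y,Z) ~ P_{UX}·P_S·P_{YZ|XS}`. -/
def rateIXY_US (pUX : U → 𝓧 → ℝ) (pS : 𝓢 → ℝ) (W : 𝓧 → 𝓢 → 𝓨 × 𝓩 → ℝ) : ℝ :=
  CMI (fun (us : U × 𝓢) (x : 𝓧) (y : 𝓨) => pUX us.1 x * pS us.2 * ∑ z, W x us.2 (y, z))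

/-- `I(U;Y|S)` under the joint law `(S,U,X,Y,Z) ~ P_{UX}·P_S·P_{YZ|XS}`. -/
def rateIUY_S (pUX : U → 𝓧 → ℝ) (pS : 𝓢 → ℝ) (W : 𝓧 → 𝓢 → 𝓨 × 𝓩 → ℝ) : ℝ :=
  CMI (fun (s : 𝓢) (u : U) (y : 𝓨) => ∑ x, pUX u x * pS s * ∑ z, W x s (y, z))

/-- `I(X;Y|S)` for an input pmf `pX`, state pmf `pS` and channel `W`. -/
def rateIXY_S (pX : 𝓧 → ℝ) (pS : 𝓢 → ℝ) (W : 𝓧 → 𝓢 → 𝓨 × 𝓩 → ℝ) : ℝ :=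
  CMI (fun (s : 𝓢) (x : 𝓧) (y : 𝓨) => pX x * pS s * ∑ z, W x s (y, z))

/-- `I(X;Z)` for an input pmf `pX`, state pmf `pS` and channel `W`. -/
def rateIXZ (pX : 𝓧 → ℝ) (pS : 𝓢 → ℝ) (W : 𝓧 → 𝓢 → 𝓨 × 𝓩 → ℝ) : ℝ :=
  MI (fun (x : 𝓧) (z : 𝓩) => ∑ s, ∑ y, pX x * pS s * W x s (y, z))

/-- Expected distortion `∑_{u,x} P_{UX}(u,x)·c*(u) = ∑_{u,z} min_{s'} ∑_s P(s,u,z)·d(s,s')`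
of the optimal one-shot estimator `ŝ*(u,z) = argmin_{s'} ∑_s P_{S|UZ}(s|u,z)·d(s,s')`
based on `(U,Z)`. -/
def optDistUZ [Nonempty 𝓢] (pUX : U → 𝓧 → ℝ) (pS : 𝓢 → ℝ)
    (W : 𝓧 → 𝓢 → 𝓨 × 𝓩 → ℝ) (d : 𝓢 → 𝓢 → ℝ) : ℝ :=
  ∑ u : U, ∑ z : 𝓩, Finset.univ.inf' Finset.univ_nonempty
    (fun s' : 𝓢 => ∑ s, (∑ x, ∑ y, pUX u x * pS s * W x s (y, z)) * d s s')

/-- Expected distortion `∑_x P_X(x)·E[d(S, ŝ*(X,Z)) | X = x]` of the optimal one-shot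
estimator `ŝ*(x,z) = argmin_{s'} ∑_s P_{S|XZ}(s|x,z)·d(s,s')` based on `(X,Z)`. -/
def optDistXZ [Nonempty 𝓢] (pX : 𝓧 → ℝ) (pS : 𝓢 → ℝ)
    (W : 𝓧 → 𝓢 → 𝓨 × 𝓩 → ℝ) (d : 𝓢 → 𝓢 → ℝ) : ℝ :=
  ∑ x : 𝓧, ∑ z : 𝓩, Finset.univ.inf' Finset.univ_nonempty
    (fun s' : 𝓢 => ∑ s, (pX x * pS s * ∑ y, W x s (y, z)) * d s s')

/-- Expected distortion `∑_x P_X(x)·c1(x)` of the optimal one-shot estimator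
`ŝ*(z) = argmin_{s'} ∑_s P_{S|Z}(s|z)·d(s,s')` based on `Z` alone. -/
def optDistZ [Nonempty 𝓢] (pX : 𝓧 → ℝ) (pS : 𝓢 → ℝ)
    (W : 𝓧 → 𝓢 → 𝓨 × 𝓩 → ℝ) (d : 𝓢 → 𝓢 → ℝ) : ℝ :=
  ∑ z : 𝓩, Finset.univ.inf' Finset.univ_nonempty
    (fun s' : 𝓢 => ∑ s, (∑ x, pX x * pS s * ∑ y, W x s (y, z)) * d s s')

end Rates

/-- The physically degraded broadcast channel `P_{YZ|XS}(y,z|x,s) = P_{Y|XS}(y|x,s)·P_{Z|Y}(z|y)`. -/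
def degW {𝓧 𝓢 𝓨 𝓩 : Type*} (Wy : 𝓧 → 𝓢 → 𝓨 → ℝ) (Wq : 𝓨 → 𝓩 → ℝ) :
    𝓧 → 𝓢 → 𝓨 × 𝓩 → ℝ :=
  fun x s yz => Wy x s yz.1 * Wq yz.1 yz.2

section Codes

variable {𝓧 𝓢 𝓨 𝓩 : Type*} [Fintype 𝓢] [Fintype 𝓨] [Fintype 𝓩]

/-- Probability of the i.i.d. state sequence `sv` and channel outputs `(yv, zv)`
given the input sequence `xv`. -/
def seqProb (pS : 𝓢 → ℝ) (W : 𝓧 → 𝓢 → 𝓨 × 𝓩 → ℝ) {n : ℕ}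
    (xv : Fin n → 𝓧) (sv : Fin n → 𝓢) (yv : Fin n → 𝓨) (zv : Fin n → 𝓩) : ℝ :=
  ∏ i, pS (sv i) * W (xv i) (sv i) (yv i, zv i)

/-- A `(M0, M1, n)` code for the SDMBC-DMS model: an encoder, a decoder at the
communication receiver (observing `(Y^n, S^n)`), a decoder at the sensing receiver
(observing `Z^n`) for the common message, and a state estimator at the sensing receiver. -/
structure SDMBCCode (𝓧 𝓢 𝓨 𝓩 : Type*) (n M0 M1 : ℕ) where
  enc : Fin M0 → Fin M1 → Fin n → 𝓧
  dec1 : (Fin n → 𝓨) → (Fin n → 𝓢) → Fin M0 × Fin M1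
  dec2 : (Fin n → 𝓩) → Fin M0
  est : (Fin n → 𝓩) → Fin n → 𝓢

/-- Average error probability `P_e^{(n)} = Pr{(Ŵ01,Ŵ1) ≠ (W0,W1) or Ŵ02 ≠ W0}` under
uniform messages. -/
def errProbSDMBC (pS : 𝓢 → ℝ) (W : 𝓧 → 𝓢 → 𝓨 × 𝓩 → ℝ) {n M0 M1 : ℕ}
    (c : SDMBCCode 𝓧 𝓢 𝓨 𝓩 n M0 M1) : ℝ :=
  (1 / ((M0 : ℝ) * (M1 : ℝ))) * ∑ w0 : Fin M0, ∑ w1 : Fin M1, ∑ sv : Fin n → 𝓢,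
    ∑ yv : Fin n → 𝓨, ∑ zv : Fin n → 𝓩,
      if c.dec1 yv sv ≠ (w0, w1) ∨ c.dec2 zv ≠ w0
      then seqProb pS W (c.enc w0 w1) sv yv zv else 0

/-- Expected average per-block distortion `D^{(n)} = (1/n) ∑_i E[d(S_i, Ŝ_i)]`. -/
def avgDistSDMBC (pS : 𝓢 → ℝ) (W : 𝓧 → 𝓢 → 𝓨 × 𝓩 → ℝ) (d : 𝓢 → 𝓢 → ℝ)
    {n M0 M1 : ℕ} (c : SDMBCCode 𝓧 𝓢 𝓨 𝓩 n M0 M1) : ℝ :=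
  (1 / ((M0 : ℝ) * (M1 : ℝ))) * ∑ w0 : Fin M0, ∑ w1 : Fin M1, ∑ sv : Fin n → 𝓢,
    ∑ yv : Fin n → 𝓨, ∑ zv : Fin n → 𝓩,
      seqProb pS W (c.enc w0 w1) sv yv zv *
        ((1 / (n : ℝ)) * ∑ i, d (sv i) (c.est zv i))

/-- Achievability of a rate-distortion tuple `(R0, R1, D)` for the SDMBC-DMS model:
there is a sequence of `(2^{nR0}, 2^{nR1}, n)` codes with vanishing error probability
and asymptotic distortion at most `D`. -/
def AchievableSDMBC (pS : 𝓢 → ℝ) (W : 𝓧 → 𝓢 → 𝓨 × 𝓩 → ℝ) (d : 𝓢 → 𝓢 → ℝ)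
    (R0 R1 D : ℝ) : Prop :=
  ∃ (M0 M1 : ℕ → ℕ) (c : ∀ n, SDMBCCode 𝓧 𝓢 𝓨 𝓩 n (M0 n) (M1 n)),
    (∀ n : ℕ, (2 : ℝ) ^ ((n : ℝ) * R0) ≤ (M0 n : ℝ)) ∧
    (∀ n : ℕ, (2 : ℝ) ^ ((n : ℝ) * R1) ≤ (M1 n : ℝ)) ∧
    Tendsto (fun n => errProbSDMBC pS W (c n)) atTop (nhds 0) ∧
    Filter.limsup (fun n => avgDistSDMBC pS W d (c n)) atTop ≤ D

/-- A `(M, n)` code for the point-to-point setting (blind estimation): the sensing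
receiver decodes nothing and estimates the state from `Z^n` alone. -/
structure P2PCode (𝓧 𝓢 𝓨 𝓩 : Type*) (n M : ℕ) where
  enc : Fin M → Fin n → 𝓧
  dec : (Fin n → 𝓨) → (Fin n → 𝓢) → Fin M
  est : (Fin n → 𝓩) → Fin n → 𝓢

def errProbP2P (pS : 𝓢 → ℝ) (W : 𝓧 → 𝓢 → 𝓨 × 𝓩 → ℝ) {n M : ℕ}
    (c : P2PCode 𝓧 𝓢 𝓨 𝓩 n M) : ℝ :=
  (1 / (M : ℝ)) * ∑ w : Fin M, ∑ sv : Fin n → 𝓢, ∑ yv : Fin n → 𝓨, ∑ zv : Fin n → 𝓩,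
    if c.dec yv sv ≠ w then seqProb pS W (c.enc w) sv yv zv else 0

def avgDistP2P (pS : 𝓢 → ℝ) (W : 𝓧 → 𝓢 → 𝓨 × 𝓩 → ℝ) (d : 𝓢 → 𝓢 → ℝ)
    {n M : ℕ} (c : P2PCode 𝓧 𝓢 𝓨 𝓩 n M) : ℝ :=
  (1 / (M : ℝ)) * ∑ w : Fin M, ∑ sv : Fin n → 𝓢, ∑ yv : Fin n → 𝓨, ∑ zv : Fin n → 𝓩,
    seqProb pS W (c.enc w) sv yv zv * ((1 / (n : ℝ)) * ∑ i, d (sv i) (c.est zv i))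

/-- Achievability of a rate-distortion pair `(R, D)` with blind estimation. -/
def AchievableP2P (pS : 𝓢 → ℝ) (W : 𝓧 → 𝓢 → 𝓨 × 𝓩 → ℝ) (d : 𝓢 → 𝓢 → ℝ)
    (R D : ℝ) : Prop :=
  ∃ (M : ℕ → ℕ) (c : ∀ n, P2PCode 𝓧 𝓢 𝓨 𝓩 n (M n)),
    (∀ n : ℕ, (2 : ℝ) ^ ((n : ℝ) * R) ≤ (M n : ℝ)) ∧
    Tendsto (fun n => errProbP2P pS W (c n)) atTop (nhds 0) ∧
    Filter.limsup (fun n => avgDistP2P pS W d (c n)) atTop ≤ D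

/-- A `(M, n)` code for the full-decoding setting: both receivers must decode the
whole message; the sensing receiver estimates the state from `Z^n` (and hence may use
its decoded message, which is a function of `Z^n`). -/
structure FDCode (𝓧 𝓢 𝓨 𝓩 : Type*) (n M : ℕ) where
  enc : Fin M → Fin n → 𝓧
  dec1 : (Fin n → 𝓨) → (Fin n → 𝓢) → Fin M
  dec2 : (Fin n → 𝓩) → Fin M
  est : (Fin n → 𝓩) → Fin n → 𝓢

def errProbFD (pS : 𝓢 → ℝ) (W : 𝓧 → 𝓢 → 𝓨 × 𝓩 → ℝ) {n M : ℕ}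
    (c : FDCode 𝓧 𝓢 𝓨 𝓩 n M) : ℝ :=
  (1 / (M : ℝ)) * ∑ w : Fin M, ∑ sv : Fin n → 𝓢, ∑ yv : Fin n → 𝓨, ∑ zv : Fin n → 𝓩,
    if c.dec1 yv sv ≠ w ∨ c.dec2 zv ≠ w
    then seqProb pS W (c.enc w) sv yv zv else 0

def avgDistFD (pS : 𝓢 → ℝ) (W : 𝓧 → 𝓢 → 𝓨 × 𝓩 → ℝ) (d : 𝓢 → 𝓢 → ℝ)
    {n M : ℕ} (c : FDCode 𝓧 𝓢 𝓨 𝓩 n M) : ℝ :=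
  (1 / (M : ℝ)) * ∑ w : Fin M, ∑ sv : Fin n → 𝓢, ∑ yv : Fin n → 𝓨, ∑ zv : Fin n → 𝓩,
    seqProb pS W (c.enc w) sv yv zv * ((1 / (n : ℝ)) * ∑ i, d (sv i) (c.est zv i))

/-- Achievability of a rate-distortion pair `(R, D)` with full-decoding-based estimation. -/
def AchievableFD (pS : 𝓢 → ℝ) (W : 𝓧 → 𝓢 → 𝓨 × 𝓩 → ℝ) (d : 𝓢 → 𝓢 → ℝ)
    (R D : ℝ) : Prop :=
  ∃ (M : ℕ → ℕ) (c : ∀ n, FDCode 𝓧 𝓢 𝓨 𝓩 n (M n)),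
    (∀ n : ℕ, (2 : ℝ) ^ ((n : ℝ) * R) ≤ (M n : ℝ)) ∧
    Tendsto (fun n => errProbFD pS W (c n)) atTop (nhds 0) ∧
    Filter.limsup (fun n => avgDistFD pS W d (c n)) atTop ≤ D

end Codes

/-- The binary alphabet `{0,1}` (with mod-2 arithmetic). -/
abbrev Bin : Type := ZMod 2

/-- `Bernoulli(q)` state pmf: `P(S = 1) = q`. -/
def bern (q : ℝ) : Bin → ℝ := fun s => if s = 1 then q else 1 - q

/-- Input pmf with `P(X = 0) = p`. -/
def pmfX (p : ℝ) : Bin → ℝ := fun x => if x = 0 then p else 1 - p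

/-- Hamming distortion `d(s, ŝ) = s ⊕ ŝ`. -/
def hamming : Bin → Bin → ℝ := fun s t => if s = t then 0 else 1

/-- The binary entropy function `H2(t) = −t·log2 t − (1−t)·log2 (1−t)`. -/
def H2 (t : ℝ) : ℝ := -(t * Real.logb 2 t) - (1 - t) * Real.logb 2 (1 - t)

/-- The channel of Example 1: `Y = S·X` and `Z = a·S·X + ((X + N) mod 2)` with
`N ~ Bernoulli(e)`.  Since `a ∈ (0,1)`, the value `Z` is faithfully encoded by the pair
`(S·X, (X + N) mod 2) ∈ Bin × Bin` (the real values `0, 1, a, a+1` correspond to the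
pairs `(0,0), (0,1), (1,0), (1,1)` respectively). -/
def ex1W (e : ℝ) : Bin → Bin → Bin × (Bin × Bin) → ℝ := fun x s yz =>
  (if yz.1 = s * x then 1 else 0) * (if yz.2.1 = s * x then 1 else 0) *
    (if yz.2.2 = x then 1 - e else e)

/-- The channel of Example 2 (degraded): `Y = S·X` and
`Z = a·Y + ((Y + N) mod 2)` with `N ~ Bernoulli(e)`, encoded by the pair
`(S·X, (S·X + N) mod 2) ∈ Bin × Bin`. -/
def ex2W (e : ℝ) : Bin → Bin → Bin × (Bin × Bin) → ℝ := fun x s yz =>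
  (if yz.1 = s * x then 1 else 0) * (if yz.2.1 = s * x then 1 else 0) *
    (if yz.2.2 = s * x then 1 - e else e)


set_option linter.unusedSectionVars false

namespace CardBound
open Finset

def phi (t : ℝ) : ℝ := t * Real.logb 2 t

lemma phi_zero : phi 0 = 0 := by simp [phi]

lemma continuous_phi : Continuous phi := by
  have : phi = fun t => (t * Real.log t) * (Real.log 2)⁻¹ := by
    funext t; simp [phi, Real.logb, div_eq_mul_inv, mul_assoc]
  rw [this]; exact Real.continuous_mul_log.mul continuous_const

lemma phi_mul {c : ℝ} (t : ℝ) (hc : c ≠ 0) :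
    phi (c * t) = c * phi t + (c * t) * Real.logb 2 c := by
  rcases eq_or_ne t 0 with rfl | ht
  · simp [phi]
  · rw [phi, phi, Real.logb_mul hc ht]; ring

lemma sum_ne_zero_of_mem {α : Type*} [Fintype α] {f : α → ℝ} (hf : ∀ a, 0 ≤ f a)
    {a : α} (ha : f a ≠ 0) : (∑ x, f x) ≠ 0 := by
  have h1 : 0 < f a := lt_of_le_of_ne (hf a) (Ne.symm ha)
  have h2 : f a ≤ ∑ x, f x := Finset.single_le_sum (fun i _ => hf i) (Finset.mem_univ a)
  exact ne_of_gt (lt_of_lt_of_le h1 h2)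

lemma mi_term {a r c : ℝ} (hr : a ≠ 0 → r ≠ 0) (hc : a ≠ 0 → c ≠ 0) :
    (if a = 0 then 0 else a * Real.logb 2 (a / (r * c)))
      = phi a - a * Real.logb 2 r - a * Real.logb 2 c := by
  rcases eq_or_ne a 0 with rfl | ha
  · simp [phi]
  · rw [if_neg ha, Real.logb_div ha (mul_ne_zero (hr ha) (hc ha)),
      Real.logb_mul (hr ha) (hc ha), phi]; ring

lemma cmi_term {T a r c : ℝ} (hT : a ≠ 0 → T ≠ 0) (hr : a ≠ 0 → r ≠ 0) (hc : a ≠ 0 → c ≠ 0) :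
    (if a = 0 then 0 else a * Real.logb 2 (T * a / (r * c)))
      = a * Real.logb 2 T + phi a - a * Real.logb 2 r - a * Real.logb 2 c := by
  rcases eq_or_ne a 0 with rfl | ha
  · simp [phi]
  · rw [if_neg ha, Real.logb_div (mul_ne_zero (hT ha) ha) (mul_ne_zero (hr ha) (hc ha)),
      Real.logb_mul (hT ha) ha, Real.logb_mul (hr ha) (hc ha), phi]; ring

lemma MI_eq {A B : Type*} [Fintype A] [Fintype B] (p : A → B → ℝ) (hp : ∀ a b, 0 ≤ p a b) :
    MI p = ((∑ a, ∑ b, phi (p a b)) - ∑ a, phi (∑ b, p a b)) - ∑ b, phi (∑ a, p a b) := by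
  have key : ∀ a b, (if p a b = 0 then 0
        else p a b * Real.logb 2 (p a b / ((∑ b', p a b') * (∑ a', p a' b))))
      = phi (p a b) - p a b * Real.logb 2 (∑ b', p a b')
        - p a b * Real.logb 2 (∑ a', p a' b) := by
    intro a b
    exact mi_term (fun h => sum_ne_zero_of_mem (hp a) h)
      (fun h => sum_ne_zero_of_mem (fun a' => hp a' b) h)
  unfold MI
  simp only [key, Finset.sum_sub_distrib]
  congr 1
  · congr 1
    apply Finset.sum_congr rfl; intro a _
    rw [← Finset.sum_mul]; rfl
  · rw [Finset.sum_comm]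
    apply Finset.sum_congr rfl; intro b _
    rw [← Finset.sum_mul]; rfl

lemma CMI_eq {C A B : Type*} [Fintype C] [Fintype A] [Fintype B] (p : C → A → B → ℝ)
    (hp : ∀ c a b, 0 ≤ p c a b) :
    CMI p = ∑ c, (((∑ a, ∑ b, p c a b) * Real.logb 2 (∑ a, ∑ b, p c a b)
        + ∑ a, ∑ b, phi (p c a b))
      - (∑ a, phi (∑ b, p c a b)) - ∑ b, phi (∑ a, p c a b)) := by
  unfold CMI
  apply Finset.sum_congr rfl; intro c _
  have key : ∀ a b, (if p c a b = 0 then 0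
        else p c a b * Real.logb 2
          ((∑ a', ∑ b', p c a' b') * p c a b / ((∑ b', p c a b') * (∑ a', p c a' b))))
      = p c a b * Real.logb 2 (∑ a', ∑ b', p c a' b') + phi (p c a b)
        - p c a b * Real.logb 2 (∑ b', p c a b')
        - p c a b * Real.logb 2 (∑ a', p c a' b) := by
    intro a b
    refine cmi_term (fun h => ?_) (fun h => sum_ne_zero_of_mem (hp c a) h)
      (fun h => sum_ne_zero_of_mem (fun a' => hp c a' b) h)
    · have : (∑ b', p c a b') ≠ 0 := sum_ne_zero_of_mem (hp c a) h
      exact sum_ne_zero_of_mem (fun a' => Finset.sum_nonneg fun b' _ => hp c a' b') this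
  simp only [key, Finset.sum_sub_distrib, Finset.sum_add_distrib]
  congr 2
  · congr 1
    simp only [← Finset.sum_mul]
  · apply Finset.sum_congr rfl; intro a _
    rw [← Finset.sum_mul]; rfl
  · rw [Finset.sum_comm]
    apply Finset.sum_congr rfl; intro b _
    rw [← Finset.sum_mul]; rfl

end CardBound

namespace CardBound

variable {E : Type*} [NormedAddCommGroup E] [NormedSpace ℝ E] [FiniteDimensional ℝ E]

lemma mem_convexHull_range_iff {ι : Type*} [Fintype ι] {v : ι → E} {x : E} :
    x ∈ convexHull ℝ (Set.range v) ↔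
      ∃ w : ι → ℝ, (∀ i, 0 ≤ w i) ∧ ∑ i, w i = 1 ∧ ∑ i, w i • v i = x := by
  classical
  rw [convexHull_range_eq_exists_affineCombination]
  constructor
  · rintro ⟨s, w, hw0, hw1, rfl⟩
    refine ⟨fun i => if i ∈ s then w i else 0, fun i => ?_, ?_, ?_⟩
    · dsimp only; split
      · exact hw0 _ ‹_›
      · exact le_refl 0
    · simp only []
      rw [Finset.sum_ite_mem, Finset.univ_inter, hw1]
    · rw [Finset.affineCombination_eq_linear_combination _ _ _ hw1]
      simp only [ite_smul, zero_smul]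
      rw [Finset.sum_ite_mem, Finset.univ_inter]
  · rintro ⟨w, hw0, hw1, hx⟩
    exact ⟨Finset.univ, w, fun i _ => hw0 i, hw1,
      by rw [Finset.affineCombination_eq_linear_combination _ _ _ hw1]; exact hx⟩

end CardBound

namespace CardBound2
open CardBound
variable {E : Type*} [NormedAddCommGroup E] [NormedSpace ℝ E] [FiniteDimensional ℝ E]

set_option linter.unusedSectionVars false

lemma drop_point {n : ℕ} {A : Set E} {v : Fin (n+1) → E} (hv : ∀ i, v i ∈ A)
    {w : Fin (n+1) → ℝ} (hw0 : ∀ i, 0 ≤ w i) (hw1 : ∑ i, w i = 1) {x : E}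
    (hx : ∑ i, w i • v i = x) {i₀ : Fin (n+1)} (hi₀ : w i₀ = 0) :
    ∃ t : Finset E, ↑t ⊆ A ∧ t.card ≤ n ∧ x ∈ convexHull ℝ (t : Set E) := by
  classical
  refine ⟨Finset.image v (Finset.univ.erase i₀), ?_, ?_, ?_⟩
  · intro e he
    simp only [Finset.coe_image, Set.mem_image] at he
    obtain ⟨i, _, rfl⟩ := he
    exact hv i
  · calc (Finset.image v (Finset.univ.erase i₀)).card ≤ (Finset.univ.erase i₀).card :=
        Finset.card_image_le
      _ = n := by simp
  · have hsum : ∑ i ∈ Finset.univ.erase i₀, w i = 1 := by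
      rw [Finset.sum_erase _ hi₀, hw1]
    have hmem := Finset.centerMass_mem_convexHull (Finset.univ.erase i₀)
      (fun i _ => hw0 i) (by rw [hsum]; norm_num)
      (z := v) (s := ((Finset.image v (Finset.univ.erase i₀) : Finset E) : Set E))
      (fun i hi => by simp only [Finset.coe_image]; exact Set.mem_image_of_mem v hi)
    rwa [Finset.centerMass_eq_of_sum_1 _ v hsum,
      Finset.sum_erase _ (by rw [hi₀, zero_smul]), hx] at hmem

lemma reduce_dependent {n : ℕ} {A : Set E} {v : Fin (n+1) → E} (hv : ∀ i, v i ∈ A)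
    (hdep : ¬ AffineIndependent ℝ v) {x : E} (hx : x ∈ convexHull ℝ (Set.range v)) :
    ∃ t : Finset E, ↑t ⊆ A ∧ t.card ≤ n ∧ x ∈ convexHull ℝ (t : Set E) := by
  classical
  set t := Caratheodory.minCardFinsetOfMemConvexHull hx with ht
  have hts : ↑t ⊆ Set.range v := Caratheodory.minCardFinsetOfMemConvexHull_subseteq hx
  have hmem : x ∈ convexHull ℝ (t : Set E) := Caratheodory.mem_minCardFinsetOfMemConvexHull hx
  have hai : AffineIndependent ℝ ((↑) : t → E) :=
    Caratheodory.affineIndependent_minCardFinsetOfMemConvexHull hx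
  refine ⟨t, fun e he => by obtain ⟨i, rfl⟩ := hts he; exact hv i, ?_, hmem⟩
  by_contra hcon
  push_neg at hcon
  have htsub : t ⊆ Finset.image v Finset.univ := by
    intro e he
    obtain ⟨i, rfl⟩ := hts he
    exact Finset.mem_image_of_mem v (Finset.mem_univ i)
  have h2 : (Finset.image v Finset.univ).card ≤ n + 1 :=
    le_trans Finset.card_image_le (by simp)
  have h1 : t.card ≤ (Finset.image v Finset.univ).card := Finset.card_le_card htsub
  have hteq : t = Finset.image v Finset.univ :=
    Finset.eq_of_subset_of_card_le htsub (by omega)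
  have himg : (Finset.image v Finset.univ).card = n + 1 := by omega
  have hvinj : Function.Injective v := by
    have := Finset.card_image_iff.mp (by rw [himg]; simp)
    intro a b hab
    exact this (Finset.mem_coe.mpr (Finset.mem_univ a)) (Finset.mem_coe.mpr (Finset.mem_univ b)) hab
  apply hdep
  have : v = ((↑) : t → E) ∘ (fun i => (⟨v i, by rw [hteq]; exact Finset.mem_image_of_mem v (Finset.mem_univ i)⟩ : t)) := rfl
  rw [this]
  exact hai.comp_embedding ⟨_, fun a b hab => hvinj (by simpa using congrArg Subtype.val hab)⟩

end CardBound2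

namespace CardBound3
open CardBound CardBound2 Filter
variable {E : Type*} [NormedAddCommGroup E] [NormedSpace ℝ E] [FiniteDimensional ℝ E]

lemma fe_core {m : ℕ} (hrank : Module.finrank ℝ E = m + 1) {A : Set E}
    (hA : IsPathConnected A) {d : Fin (m+2) → E} (hdA : ∀ i, d i ∈ A)
    {x : E} (hx : x ∈ convexHull ℝ (Set.range d)) :
    ∃ t : Finset E, ↑t ⊆ A ∧ t.card ≤ m + 1 ∧ x ∈ convexHull ℝ (t : Set E) := by
  classical
  obtain ⟨γ, hγA⟩ := hA.joinedIn (d 0) (hdA 0) (d 1) (hdA 1)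
  have hγext : ∀ t : ℝ, γ.extend t ∈ A := fun t => hγA _
  set fam : ℝ → Fin (m+2) → E :=
    fun t => Fin.cons (γ.extend t) (fun j : Fin (m+1) => d j.succ) with hfam
  have hfam0 : fam 0 = d := by
    funext i
    refine Fin.cases ?_ (fun j => ?_) i
    · simp [hfam, Path.extend_zero]
    · simp [hfam]
  set S : Set ℝ := {t | t ∈ Set.Icc (0:ℝ) 1 ∧ x ∈ convexHull ℝ (Set.range (fam t))} with hS
  have h0S : (0:ℝ) ∈ S := ⟨⟨le_refl 0, zero_le_one⟩, by rw [hfam0]; exact hx⟩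
  have hg : Continuous (fun p : ℝ × (Fin (m+2) → ℝ) => ∑ i, p.2 i • fam p.1 i) := by
    apply continuous_finset_sum
    intro i _
    refine ((continuous_apply i).comp continuous_snd).smul ?_
    refine Fin.cases ?_ (fun j => ?_) i
    · simp only [hfam, Fin.cons_zero]
      exact γ.continuous_extend.comp continuous_fst
    · simpa [hfam] using continuous_const
  have hSclosed : IsClosed S := by
    have hC : IsCompact ((Set.Icc (0:ℝ) 1 ×ˢ stdSimplex ℝ (Fin (m+2))) ∩
        {p : ℝ × (Fin (m+2) → ℝ) | ∑ i, p.2 i • fam p.1 i = x}) :=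
      ((isCompact_Icc).prod (isCompact_stdSimplex _ _)).inter_right
        (isClosed_eq hg continuous_const)
    have hSeq : S = Prod.fst '' ((Set.Icc (0:ℝ) 1 ×ˢ stdSimplex ℝ (Fin (m+2))) ∩
        {p : ℝ × (Fin (m+2) → ℝ) | ∑ i, p.2 i • fam p.1 i = x}) := by
      ext t
      constructor
      · rintro ⟨htI, hmem⟩
        obtain ⟨w, hw0, hw1, hwx⟩ := mem_convexHull_range_iff.mp hmem
        exact ⟨(t, w), ⟨⟨htI, ⟨hw0, hw1⟩⟩, hwx⟩, rfl⟩
      · rintro ⟨⟨t', w⟩, ⟨⟨htI, hw⟩, hwx⟩, rfl⟩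
        exact ⟨htI, mem_convexHull_range_iff.mpr ⟨w, hw.1, hw.2, hwx⟩⟩
    rw [hSeq]
    exact (hC.image continuous_fst).isClosed
  have hbdd : BddAbove S := ⟨1, fun t ht => ht.1.2⟩
  set t0 := sSup S with ht0def
  have ht0S : t0 ∈ S := hSclosed.csSup_mem ⟨0, h0S⟩ hbdd
  set em : Fin (m+2) → E := fam t0 with hem
  have hemA : ∀ i, em i ∈ A := by
    intro i
    refine Fin.cases ?_ (fun j => ?_) i
    · simpa [hem, hfam] using hγext t0
    · simpa [hem, hfam] using hdA j.succ
  have hxem : x ∈ convexHull ℝ (Set.range em) := ht0S.2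
  by_cases hdep : ¬ AffineIndependent ℝ em
  · exact reduce_dependent hemA hdep hxem
  push_neg at hdep
  have htop : affineSpan ℝ (Set.range em) = ⊤ :=
    hdep.affineSpan_eq_top_iff_card_eq_finrank_add_one.mpr (by simp [hrank])
  set b : AffineBasis (Fin (m+2)) ℝ E := ⟨em, hdep, htop⟩ with hb
  have hbcoe : ⇑b = em := rfl
  set ν : Fin (m+2) → ℝ := fun i => b.coord i x with hν
  have hν1 : ∑ i, ν i = 1 := b.sum_coord_apply_eq_one x
  have hνx : ∑ i, ν i • em i = x := by
    have h := b.affineCombination_coord_eq_self x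
    rwa [Finset.affineCombination_eq_linear_combination _ _ _ hν1, hbcoe] at h
  have hν0 : ∀ i, 0 ≤ ν i := by
    obtain ⟨w, hw0, hw1, hwx⟩ := mem_convexHull_range_iff.mp hxem
    intro i
    have hcomb : (Finset.affineCombination ℝ Finset.univ (⇑b)) w = x := by
      rw [Finset.affineCombination_eq_linear_combination _ _ _ hw1, hbcoe]; exact hwx
    have : ν i = w i := by
      rw [hν]
      simp only
      rw [← hcomb]
      exact b.coord_apply_combination_of_mem (Finset.mem_univ i) hw1
    rw [this]; exact hw0 i
  by_cases hzero : ∃ i, ν i = 0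
  · obtain ⟨i₀, hi₀⟩ := hzero
    exact drop_point hemA hν0 hν1 hνx hi₀
  push_neg at hzero
  have hνpos : ∀ i, 0 < ν i := fun i => lt_of_le_of_ne (hν0 i) (Ne.symm (hzero i))
  exfalso
  have ht0lt : t0 < 1 := by
    rcases lt_or_eq_of_le ht0S.1.2 with h | h
    · exact h
    · exfalso
      have h01 : em 0 = em 1 := by
        have e0 : em 0 = γ.extend 1 := by rw [hem, h]; simp [hfam]
        have e1 : em 1 = d 1 := by
          have h1 : (1 : Fin (m+2)) = (0 : Fin (m+1)).succ := by
            rw [Fin.succ_zero_eq_one]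
          rw [hem, h1]
          simp [hfam]
        rw [e0, e1, Path.extend_one]
      exact (by simp : ((0:Fin (m+2)) ≠ 1)) (hdep.injective h01)
  set β : ℝ → Fin (m+2) → ℝ := fun t i => b.coord i (γ.extend t) with hβ
  have hβcont : ∀ i, Continuous (fun t => β t i) := fun i =>
    (continuous_barycentric_coord b i).comp γ.continuous_extend
  have hem0 : em 0 = γ.extend t0 := by simp [hem, hfam]
  have hemsucc : ∀ j : Fin (m+1), em j.succ = d j.succ := fun j => by simp [hem, hfam]
  have hβt0 : ∀ i, β t0 i = if i = 0 then 1 else 0 := by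
    intro i
    have hb0 : γ.extend t0 = b 0 := by rw [hbcoe, hem0]
    rw [hβ]
    simp only
    rw [hb0, AffineBasis.coord_apply]
  set μ : ℝ → Fin (m+2) → ℝ :=
    fun t => Fin.cons (ν 0 / β t 0)
      (fun j => ν j.succ - (ν 0 / β t 0) * β t j.succ) with hμ
  have hdiv : ContinuousAt (fun t => ν 0 / β t 0) t0 := by
    apply ContinuousAt.div continuousAt_const (hβcont 0).continuousAt
    rw [hβt0 0]; norm_num
  have hμcont : ∀ i, ContinuousAt (fun t => μ t i) t0 := by
    intro i
    refine Fin.cases ?_ (fun j => ?_) i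
    · simpa [hμ] using hdiv
    · simp only [hμ, Fin.cons_succ]
      exact continuousAt_const.sub (hdiv.mul (hβcont j.succ).continuousAt)
  have hμt0 : ∀ i, 0 < μ t0 i := by
    intro i
    refine Fin.cases ?_ (fun j => ?_) i
    · rw [hμ]; simp only [Fin.cons_zero]
      rw [hβt0 0, if_pos rfl, div_one]; exact hνpos 0
    · rw [hμ]; simp only [Fin.cons_succ]
      rw [hβt0 j.succ, if_neg (Fin.succ_ne_zero j), mul_zero, sub_zero]
      exact hνpos j.succ
  have hev : ∀ᶠ t in nhds t0, (0 < β t 0 ∧ ∀ i, 0 < μ t i) := by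
    have h1 : ∀ᶠ t in nhds t0, 0 < β t 0 := by
      have := (hβcont 0).continuousAt (x := t0) (Ioi_mem_nhds (by rw [hβt0 0]; norm_num : (0:ℝ) < β t0 0))
      filter_upwards [this] with t ht using ht
    have h2 : ∀ᶠ t in nhds t0, ∀ i, 0 < μ t i := by
      rw [Filter.eventually_all]
      intro i
      have := (hμcont i) (Ioi_mem_nhds (hμt0 i))
      filter_upwards [this] with t ht using ht
    exact h1.and h2
  obtain ⟨t1, ⟨hβ1pos, hμ1pos⟩, ht1gt, ht1lt⟩ :
      ∃ t1, (0 < β t1 0 ∧ ∀ i, 0 < μ t1 i) ∧ t0 < t1 ∧ t1 < 1 := by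
    have h2 : ∀ᶠ t in nhdsWithin t0 (Set.Ioi t0), (0 < β t 0 ∧ ∀ i, 0 < μ t i) :=
      hev.filter_mono nhdsWithin_le_nhds
    have h3 : ∀ᶠ t in nhdsWithin t0 (Set.Ioi t0), t < 1 := by
      filter_upwards [Ioo_mem_nhdsGT_of_mem (Set.mem_Ico.mpr ⟨le_refl t0, ht0lt⟩)] with t ht
        using ht.2
    have h4 : ∀ᶠ t in nhdsWithin t0 (Set.Ioi t0), t0 < t :=
      eventually_mem_nhdsWithin.mono (fun t ht => ht)
    exact ((h2.and (h4.and h3)).exists).imp (fun t ⟨ha, hb, hc⟩ => ⟨ha, hb, hc⟩)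
  have hβne : β t1 0 ≠ 0 := ne_of_gt hβ1pos
  have hβsum : β t1 0 + ∑ j : Fin (m+1), β t1 j.succ = 1 := by
    have h := b.sum_coord_apply_eq_one (γ.extend t1)
    rw [Fin.sum_univ_succ] at h
    exact h
  have hνsum : ν 0 + ∑ j : Fin (m+1), ν j.succ = 1 := by
    rw [← Fin.sum_univ_succ]; exact hν1
  have hsum1 : ∑ i, μ t1 i = 1 := by
    rw [Fin.sum_univ_succ]
    simp only [hμ, Fin.cons_zero, Fin.cons_succ]
    rw [Finset.sum_sub_distrib, ← Finset.mul_sum]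
    have h1 : ∑ j : Fin (m+1), β t1 j.succ = 1 - β t1 0 := by linarith
    have h2 : ∑ j : Fin (m+1), ν j.succ = 1 - ν 0 := by linarith
    rw [h1, h2]
    field_simp
    ring
  have hγrep : γ.extend t1 = ∑ i, β t1 i • em i := by
    have h := b.affineCombination_coord_eq_self (γ.extend t1)
    rw [Finset.affineCombination_eq_linear_combination _ _ _
      (b.sum_coord_apply_eq_one _), hbcoe] at h
    exact h.symm
  have hcβ : (ν 0 / β t1 0) * β t1 0 = ν 0 := div_mul_cancel₀ _ hβne
  have hcomb : ∑ i, μ t1 i • fam t1 i = x := by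
    rw [Fin.sum_univ_succ]
    simp only [hμ, hfam, Fin.cons_zero, Fin.cons_succ]
    rw [hγrep, Fin.sum_univ_succ, smul_add, Finset.smul_sum]
    simp only [smul_smul, hcβ]
    have hd2em : ∀ j : Fin (m+1),
        (ν j.succ - ν 0 / β t1 0 * β t1 j.succ) • d j.succ
          = (ν j.succ - ν 0 / β t1 0 * β t1 j.succ) • em j.succ := fun j => by
      rw [hemsucc]
    simp only [hd2em]
    rw [add_assoc, ← Finset.sum_add_distrib]
    have : ∀ j : Fin (m+1),
        (ν 0 / β t1 0 * β t1 j.succ) • em j.succ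
          + (ν j.succ - ν 0 / β t1 0 * β t1 j.succ) • em j.succ = ν j.succ • em j.succ := by
      intro j
      rw [← add_smul]
      congr 1
      ring
    simp only [this]
    rw [← Fin.sum_univ_succ (fun i => ν i • em i)]
    exact hνx
  have ht1S : t1 ∈ S := by
    refine ⟨⟨le_trans ht0S.1.1 (le_of_lt ht1gt), le_of_lt ht1lt⟩, ?_⟩
    exact mem_convexHull_range_iff.mpr
      ⟨μ t1, fun i => le_of_lt (hμ1pos i), hsum1, hcomb⟩
  exact absurd (le_csSup hbdd ht1S) (not_le.mpr ht1gt)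

end CardBound3

namespace CardBound4
open CardBound CardBound2 CardBound3
variable {E : Type*} [NormedAddCommGroup E] [NormedSpace ℝ E] [FiniteDimensional ℝ E]

lemma fenchel_eggleston {A : Set E} (hA : IsPathConnected A) {x : E}
    (hx : x ∈ convexHull ℝ A) {n : ℕ} (hrank : Module.finrank ℝ E = n) (hn : 1 ≤ n) :
    ∃ t : Finset E, ↑t ⊆ A ∧ t.card ≤ n ∧ x ∈ convexHull ℝ (t : Set E) := by
  classical
  rw [convexHull_eq_union] at hx
  simp only [Set.mem_iUnion] at hx
  obtain ⟨t0, ht0A, ht0ai, ht0x⟩ := hx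
  have hcard : t0.card ≤ n + 1 := by
    have h1 := ht0ai.card_le_finrank_succ
    have h2 : Module.finrank ℝ ↥(vectorSpan ℝ (Set.range ((↑) : t0 → E)))
        ≤ Module.finrank ℝ E := Submodule.finrank_le _
    rw [Fintype.card_coe] at h1
    omega
  rcases le_or_gt t0.card n with h | h
  · exact ⟨t0, ht0A, h, ht0x⟩
  have hcard' : t0.card = n + 1 := by omega
  obtain ⟨m, rfl⟩ : ∃ m, n = m + 1 := ⟨n - 1, by omega⟩
  have hcardfin : Fintype.card ↥t0 = m + 2 := by rw [Fintype.card_coe]; omega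
  set e := (Fintype.equivFinOfCardEq hcardfin).symm with he
  set d : Fin (m+2) → E := fun i => ((e i : E)) with hd
  have hdA : ∀ i, d i ∈ A := fun i => ht0A (e i).2
  have hrange : Set.range d = ↑t0 := by
    ext y
    constructor
    · rintro ⟨i, rfl⟩; exact (e i).2
    · intro hy; exact ⟨e.symm ⟨y, hy⟩, by simp [hd]⟩
  have hdx : x ∈ convexHull ℝ (Set.range d) := by rwa [hrange]
  exact fe_core hrank hA hdA hdx

end CardBound4

namespace CardBound5
open CardBound Finset

variable {𝓧 𝓢 𝓨 𝓩 : Type*} [Fintype 𝓧] [Fintype 𝓢] [Fintype 𝓨] [Fintype 𝓩]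

def Kz (pS : 𝓢 → ℝ) (W : 𝓧 → 𝓢 → 𝓨 × 𝓩 → ℝ) (x : 𝓧) (z : 𝓩) : ℝ :=
  ∑ s, ∑ y, pS s * W x s (y, z)

def Wyy (W : 𝓧 → 𝓢 → 𝓨 × 𝓩 → ℝ) (x : 𝓧) (s : 𝓢) (y : 𝓨) : ℝ := ∑ z, W x s (y, z)

variable {pS : 𝓢 → ℝ} {W : 𝓧 → 𝓢 → 𝓨 × 𝓩 → ℝ}

lemma Kz_nonneg (hpS : IsPMF pS) (hW : IsChan2 W) (x : 𝓧) (z : 𝓩) : 0 ≤ Kz pS W x z :=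
  Finset.sum_nonneg fun s _ => Finset.sum_nonneg fun y _ =>
    mul_nonneg (hpS.1 s) ((hW x s).1 _)

lemma Kz_sum (hpS : IsPMF pS) (hW : IsChan2 W) (x : 𝓧) : ∑ z, Kz pS W x z = 1 := by
  unfold Kz
  rw [Finset.sum_comm]
  have h : ∀ s, ∑ z, ∑ y, pS s * W x s (y, z) = pS s := by
    intro s
    simp only [← Finset.mul_sum]
    rw [Finset.sum_comm]
    rw [show (∑ y, ∑ z, W x s (y, z)) = ∑ c : 𝓨 × 𝓩, W x s c from (Fintype.sum_prod_type _).symm,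
      (hW x s).2, mul_one]
  rw [Finset.sum_congr rfl fun s _ => h s, hpS.2]

lemma Wyy_sum (hW : IsChan2 W) (x : 𝓧) (s : 𝓢) : ∑ y, Wyy W x s y = 1 := by
  unfold Wyy
  rw [show (∑ y, ∑ z, W x s (y, z)) = ∑ c : 𝓨 × 𝓩, W x s c from (Fintype.sum_prod_type _).symm,
    (hW x s).2]

lemma sum_z_r (hpS : IsPMF pS) (hW : IsChan2 W) (v : 𝓧 → ℝ) :
    ∑ z, ∑ x, v x * Kz pS W x z = ∑ x, v x := by
  rw [Finset.sum_comm]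
  apply Finset.sum_congr rfl
  intro x _
  rw [← Finset.mul_sum, Kz_sum hpS hW, mul_one]

lemma sum_xy_tot (hW : IsChan2 W) (v : 𝓧 → ℝ) (s : 𝓢) :
    ∑ x, ∑ y, v x * pS s * Wyy W x s y = (∑ x, v x) * pS s := by
  have h : ∀ x, ∑ y, v x * pS s * Wyy W x s y = v x * pS s := by
    intro x
    rw [← Finset.mul_sum, Wyy_sum hW, mul_one]
  rw [Finset.sum_congr rfl fun x _ => h x, ← Finset.sum_mul]

def G1 (pS : 𝓢 → ℝ) (W : 𝓧 → 𝓢 → 𝓨 × 𝓩 → ℝ) (pX : 𝓧 → ℝ) (v : 𝓧 → ℝ) : ℝ :=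
  ((∑ z, phi (∑ x, v x * Kz pS W x z)) - phi (∑ x, v x))
    - ∑ z, (∑ x, v x * Kz pS W x z) * Real.logb 2 (∑ x, pX x * Kz pS W x z)

def G2 (pS : 𝓢 → ℝ) (W : 𝓧 → 𝓢 → 𝓨 × 𝓩 → ℝ) (v : 𝓧 → ℝ) : ℝ :=
  ∑ s, ((phi ((∑ x, v x) * pS s)
      + ∑ x, ∑ y, phi (v x * pS s * Wyy W x s y))
    - (∑ x, phi (v x * pS s))
    - ∑ y, phi (∑ x, v x * pS s * Wyy W x s y))

lemma rateIUZ_eq {U' : Type*} [Fintype U'] (hpS : IsPMF pS) (hW : IsChan2 W)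
    (p : U' → 𝓧 → ℝ) (hp : ∀ u x, 0 ≤ p u x) (pX : 𝓧 → ℝ)
    (hmarg : ∀ x, ∑ u, p u x = pX x) :
    rateIUZ p pS W = ∑ u, G1 pS W pX (fun x => p u x) := by
  have hPdef : (fun (u:U') (z:𝓩) => ∑ s, ∑ x, ∑ y, p u x * pS s * W x s (y, z))
      = fun u z => ∑ x, p u x * Kz pS W x z := by
    funext u z
    rw [Finset.sum_comm]
    apply Finset.sum_congr rfl; intro x _
    rw [Kz, Finset.mul_sum]
    apply Finset.sum_congr rfl; intro s _
    rw [Finset.mul_sum]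
    apply Finset.sum_congr rfl; intro y _
    ring
  unfold rateIUZ
  rw [hPdef, MI_eq _ (fun u z => Finset.sum_nonneg fun x _ =>
    mul_nonneg (hp u x) (Kz_nonneg hpS hW x z))]
  unfold G1
  rw [Finset.sum_sub_distrib, Finset.sum_sub_distrib]
  congr 1
  · congr 1
    apply Finset.sum_congr rfl; intro u _
    rw [sum_z_r hpS hW]
  · rw [Finset.sum_comm]
    apply Finset.sum_congr rfl; intro z _
    have hcol : ∑ u, ∑ x, p u x * Kz pS W x z = ∑ x, pX x * Kz pS W x z := by
      rw [Finset.sum_comm]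
      apply Finset.sum_congr rfl; intro x _
      rw [← Finset.sum_mul, hmarg]
    rw [← Finset.sum_mul, hcol]
    rfl

lemma rateIXY_US_eq {U' : Type*} [Fintype U'] (hpS : IsPMF pS) (hW : IsChan2 W)
    (p : U' → 𝓧 → ℝ) (hp : ∀ u x, 0 ≤ p u x) :
    rateIXY_US p pS W = ∑ u, G2 pS W (fun x => p u x) := by
  unfold rateIXY_US
  rw [CMI_eq _ (fun us x y => mul_nonneg (mul_nonneg (hp _ _) (hpS.1 _))
    (Finset.sum_nonneg fun z _ => (hW x us.2).1 _))]
  rw [Fintype.sum_prod_type]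
  apply Finset.sum_congr rfl; intro u _
  unfold G2
  apply Finset.sum_congr rfl; intro s _
  have hrow : ∀ x, ∑ y, p u x * pS s * (∑ z, W x s (y, z)) = p u x * pS s := by
    intro x
    rw [← Finset.mul_sum,
      show (∑ y, ∑ z, W x s (y, z)) = ∑ c : 𝓨 × 𝓩, W x s c from (Fintype.sum_prod_type _).symm,
      (hW x s).2, mul_one]
  have htot : ∑ x, ∑ y, p u x * pS s * (∑ z, W x s (y, z)) = (∑ x, p u x) * pS s := by
    rw [Finset.sum_congr rfl fun x _ => hrow x, ← Finset.sum_mul]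
  rw [htot]
  simp only [hrow]
  simp only [phi, Wyy]

lemma G1_zero (pX : 𝓧 → ℝ) : G1 pS W pX (fun _ => 0) = 0 := by
  simp [G1, phi]

lemma G2_zero : G2 pS W (fun _ => 0) = 0 := by
  simp [G2, phi]

lemma sum_smul_phi {ι : Type*} [Fintype ι] (f : ι → ℝ) {c : ℝ} (hc : c ≠ 0) :
    ∑ i, phi (c * f i) = c * (∑ i, phi (f i)) + (c * Real.logb 2 c) * ∑ i, f i := by
  simp only [phi_mul _ hc, Finset.sum_add_distrib]
  rw [Finset.mul_sum, Finset.mul_sum]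
  congr 1
  apply Finset.sum_congr rfl; intro i _; ring

lemma G1_smul (hpS : IsPMF pS) (hW : IsChan2 W) (pX : 𝓧 → ℝ) (v : 𝓧 → ℝ)
    {c : ℝ} (hc : 0 ≤ c) :
    G1 pS W pX (fun x => c * v x) = c * G1 pS W pX v := by
  rcases eq_or_lt_of_le hc with rfl | hc
  · simp only [zero_mul]
    rw [G1_zero]
  have hcne : c ≠ 0 := ne_of_gt hc
  unfold G1
  have h1 : ∀ z, ∑ x, (c * v x) * Kz pS W x z = c * ∑ x, v x * Kz pS W x z := by
    intro z
    rw [Finset.mul_sum]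
    apply Finset.sum_congr rfl; intro x _; ring
  have h2 : ∑ x, c * v x = c * ∑ x, v x := by rw [Finset.mul_sum]
  simp only [h1, h2]
  rw [sum_smul_phi _ hcne, phi_mul _ hcne]
  have hC : ∑ z, (c * (∑ x, v x * Kz pS W x z)) * Real.logb 2 (∑ x, pX x * Kz pS W x z)
      = c * ∑ z, (∑ x, v x * Kz pS W x z) * Real.logb 2 (∑ x, pX x * Kz pS W x z) := by
    rw [Finset.mul_sum]
    apply Finset.sum_congr rfl; intro z _; ring
  rw [hC, sum_z_r hpS hW]
  ring

lemma G2_smul (hpS : IsPMF pS) (hW : IsChan2 W) (v : 𝓧 → ℝ)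
    {c : ℝ} (hc : 0 ≤ c) :
    G2 pS W (fun x => c * v x) = c * G2 pS W v := by
  rcases eq_or_lt_of_le hc with rfl | hc
  · simp only [zero_mul]
    rw [G2_zero]
  have hcne : c ≠ 0 := ne_of_gt hc
  unfold G2
  rw [Finset.mul_sum]
  apply Finset.sum_congr rfl; intro s _
  have h2 : ∑ x, c * v x = c * ∑ x, v x := by rw [Finset.mul_sum]
  have h4 : ∀ x, (c * v x) * pS s = c * (v x * pS s) := by intro x; ring
  have h3 : ∀ x y, c * (v x * pS s) * Wyy W x s y = c * (v x * pS s * Wyy W x s y) := by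
    intro x y; ring
  have h5 : ∀ y, ∑ x, c * (v x * pS s) * Wyy W x s y
      = c * ∑ x, v x * pS s * Wyy W x s y := by
    intro y
    rw [Finset.mul_sum]
    apply Finset.sum_congr rfl; intro x _; ring
  have h6 : (c * ∑ x, v x) * pS s = c * ((∑ x, v x) * pS s) := by ring
  simp only [h2, h4, h6]
  simp only [h5]
  simp only [h3]
  rw [phi_mul _ hcne]
  have e1 : ∑ x, ∑ y, phi (c * (v x * pS s * Wyy W x s y))
      = c * (∑ x, ∑ y, phi (v x * pS s * Wyy W x s y))
        + (c * Real.logb 2 c) * ((∑ x, v x) * pS s) := by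
    have : ∀ x, ∑ y, phi (c * (v x * pS s * Wyy W x s y))
        = c * (∑ y, phi (v x * pS s * Wyy W x s y))
          + (c * Real.logb 2 c) * ∑ y, v x * pS s * Wyy W x s y :=
      fun x => sum_smul_phi _ hcne
    simp only [this, Finset.sum_add_distrib]
    rw [← Finset.mul_sum, ← Finset.mul_sum, sum_xy_tot hW]
  have e2 : ∑ x, phi (c * (v x * pS s))
      = c * (∑ x, phi (v x * pS s)) + (c * Real.logb 2 c) * ((∑ x, v x) * pS s) := by
    rw [sum_smul_phi _ hcne, ← Finset.sum_mul]
  have e3 : ∑ y, phi (c * ∑ x, v x * pS s * Wyy W x s y)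
      = c * (∑ y, phi (∑ x, v x * pS s * Wyy W x s y))
        + (c * Real.logb 2 c) * ((∑ x, v x) * pS s) := by
    rw [sum_smul_phi _ hcne]
    congr 2
    rw [Finset.sum_comm, sum_xy_tot hW]
  rw [e1, e2, e3]
  ring

lemma G1_cont (pX : 𝓧 → ℝ) : Continuous (fun v : 𝓧 → ℝ => G1 pS W pX v) := by
  unfold G1
  apply Continuous.sub
  apply Continuous.sub
  · apply continuous_finset_sum; intro z _
    exact continuous_phi.comp
      (continuous_finset_sum _ fun x _ => (continuous_apply x).mul continuous_const)
  · exact continuous_phi.comp (continuous_finset_sum _ fun x _ => continuous_apply x)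
  · apply continuous_finset_sum; intro z _
    exact (continuous_finset_sum _ fun x _ =>
      (continuous_apply x).mul continuous_const).mul continuous_const

lemma G2_cont : Continuous (fun v : 𝓧 → ℝ => G2 pS W v) := by
  unfold G2
  apply continuous_finset_sum; intro s _
  apply Continuous.sub
  apply Continuous.sub
  · apply Continuous.add
    · exact continuous_phi.comp
        ((continuous_finset_sum _ fun x _ => continuous_apply x).mul continuous_const)
    · apply continuous_finset_sum; intro x _
      apply continuous_finset_sum; intro y _
      exact continuous_phi.comp
        (((continuous_apply x).mul continuous_const).mul continuous_const)
  · apply continuous_finset_sum; intro x _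
    exact continuous_phi.comp ((continuous_apply x).mul continuous_const)
  · apply continuous_finset_sum; intro y _
    exact continuous_phi.comp (continuous_finset_sum _ fun x _ =>
      ((continuous_apply x).mul continuous_const).mul continuous_const)

end CardBound5


/-- **Cardinality bound for the auxiliary random variable.**
For every finite alphabet `𝒰` and pmf `P_{UX}`, there are an alphabet `𝒰'` with
`|𝒰'| ≤ |𝒳| + 1` and a pmf `P_{U'X}` with the same `𝒳`-marginal such that
`I(U';Z) = I(U;Z)` and `I(X;Y|U',S) = I(X;Y|U,S)` (and `I(X;Y|S)` is unchanged since
the `𝒳`-marginal is preserved); consequently the rate region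
`{(R0,R1) : R0 ≤ I(U;Z), R1 ≤ I(X;Y|U,S), R0+R1 ≤ I(X;Y|S)}` is the same for
`(U,X)` and `(U',X)`. -/
theorem cardinality_bound
    {U 𝓧 𝓢 𝓨 𝓩 : Type*} [Fintype U] [Fintype 𝓧] [Fintype 𝓢] [Fintype 𝓨] [Fintype 𝓩]
    (pS : 𝓢 → ℝ) (hpS : IsPMF pS)
    (W : 𝓧 → 𝓢 → 𝓨 × 𝓩 → ℝ) (hW : IsChan2 W)
    (pUX : U → 𝓧 → ℝ) (hpUX : IsPMF2 pUX) :
    ∃ (k : ℕ) (pU'X : Fin k → 𝓧 → ℝ), k ≤ Fintype.card 𝓧 + 1 ∧ IsPMF2 pU'X ∧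
      (∀ x, ∑ u', pU'X u' x = ∑ u, pUX u x) ∧
      rateIUZ pU'X pS W = rateIUZ pUX pS W ∧
      rateIXY_US pU'X pS W = rateIXY_US pUX pS W ∧
      {r : ℝ × ℝ | r.1 ≤ rateIUZ pU'X pS W ∧ r.2 ≤ rateIXY_US pU'X pS W ∧
          r.1 + r.2 ≤ rateIXY_S (fun x => ∑ u', pU'X u' x) pS W} =
        {r : ℝ × ℝ | r.1 ≤ rateIUZ pUX pS W ∧ r.2 ≤ rateIXY_US pUX pS W ∧
          r.1 + r.2 ≤ rateIXY_S (fun x => ∑ u, pUX u x) pS W} := by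
  classical
  rcases isEmpty_or_nonempty 𝓧 with hX | hX
  · exfalso
    have h := hpUX.2
    simp at h
  obtain ⟨x₀⟩ := hX
  set pX : 𝓧 → ℝ := fun x => ∑ u, pUX u x with hpXdef
  have hpX0 : ∀ x, 0 ≤ pX x := fun x => Finset.sum_nonneg fun u _ => hpUX.1 u x
  have hpX1 : ∑ x, pX x = 1 := by
    rw [hpXdef, Finset.sum_comm]
    exact hpUX.2
  -- the ambient space
  let F := (({x : 𝓧 // x ≠ x₀} → ℝ) × ℝ × ℝ)
  have hfr : Module.finrank ℝ F = Fintype.card 𝓧 + 1 := by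
    have hcs : Fintype.card {x : 𝓧 // x ≠ x₀} = Fintype.card 𝓧 - 1 := by
      rw [Fintype.card_subtype_compl, Fintype.card_subtype_eq]
    have hpos : 1 ≤ Fintype.card 𝓧 := Fintype.card_pos_iff.mpr ⟨x₀⟩
    show Module.finrank ℝ (({x : 𝓧 // x ≠ x₀} → ℝ) × ℝ × ℝ) = Fintype.card 𝓧 + 1
    rw [Module.finrank_prod, Module.finrank_prod, Module.finrank_pi, Module.finrank_self, hcs]
    omega
  let Φ : (𝓧 → ℝ) → F := fun q =>
    (fun x' => q x'.1, (CardBound5.G1 pS W pX q, CardBound5.G2 pS W q))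
  have hΦcont : Continuous Φ := by
    refine Continuous.prodMk ?_ (Continuous.prodMk ?_ ?_)
    · exact continuous_pi fun x' => continuous_apply x'.1
    · exact CardBound5.G1_cont pX
    · exact CardBound5.G2_cont
  have hsimplex_ne : (stdSimplex ℝ 𝓧).Nonempty := by
    refine ⟨fun x => if x = x₀ then 1 else 0, fun x => ?_, ?_⟩
    · dsimp only
      split <;> norm_num
    · simp
  have hApc : IsPathConnected (Φ '' stdSimplex ℝ 𝓧) :=
    ((convex_stdSimplex ℝ 𝓧).isPathConnected hsimplex_ne).image hΦcont
  -- the target point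
  set xstar : F := (fun x' => pX x'.1, (rateIUZ pUX pS W, rateIXY_US pUX pS W)) with hxstardef
  -- membership of xstar in the convex hull
  set lam : U → ℝ := fun u => ∑ x, pUX u x with hlamdef
  have hlam0 : ∀ u, 0 ≤ lam u := fun u => Finset.sum_nonneg fun x _ => hpUX.1 u x
  have hlamsum : ∑ u, lam u = 1 := hpUX.2
  set t : Finset U := Finset.univ.filter (fun u => lam u ≠ 0) with htdef
  have hsum_t : ∑ u ∈ t, lam u = 1 := by
    rw [htdef, Finset.sum_filter_ne_zero, hlamsum]
  set qfun : U → 𝓧 → ℝ := fun u x => (lam u)⁻¹ * pUX u x with hqfundef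
  have hq : ∀ u ∈ t, qfun u ∈ stdSimplex ℝ 𝓧 := by
    intro u hu
    have hne : lam u ≠ 0 := (Finset.mem_filter.mp hu).2
    refine ⟨fun x => mul_nonneg (inv_nonneg.mpr (hlam0 u)) (hpUX.1 u x), ?_⟩
    rw [show (∑ x, qfun u x) = (lam u)⁻¹ * ∑ x, pUX u x from by
      rw [hqfundef]; exact (Finset.mul_sum _ _ _).symm]
    have hll : ∑ x, pUX u x = lam u := rfl
    rw [hll, inv_mul_cancel₀ hne]
  set Psi : U → F := fun u =>
    (fun x' => pUX u x'.1,
      (CardBound5.G1 pS W pX (fun x => pUX u x), CardBound5.G2 pS W (fun x => pUX u x))) with hPsidef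
  have hlamq : ∀ u ∈ t, lam u • Φ (qfun u) = Psi u := by
    intro u hu
    have hne : lam u ≠ 0 := (Finset.mem_filter.mp hu).2
    have hinv : (0:ℝ) ≤ (lam u)⁻¹ := inv_nonneg.mpr (hlam0 u)
    refine Prod.ext ?_ (Prod.ext ?_ ?_)
    · show lam u • (fun x' : {x : 𝓧 // x ≠ x₀} => qfun u x'.1) = fun x' => pUX u x'.1
      funext x'
      show lam u * ((lam u)⁻¹ * pUX u x'.1) = pUX u x'.1
      rw [← mul_assoc, mul_inv_cancel₀ hne, one_mul]
    · show lam u * CardBound5.G1 pS W pX (qfun u) = CardBound5.G1 pS W pX (fun x => pUX u x)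
      rw [show qfun u = fun x => (lam u)⁻¹ * pUX u x from rfl,
        CardBound5.G1_smul hpS hW pX _ hinv, ← mul_assoc, mul_inv_cancel₀ hne, one_mul]
    · show lam u * CardBound5.G2 pS W (qfun u) = CardBound5.G2 pS W (fun x => pUX u x)
      rw [show qfun u = fun x => (lam u)⁻¹ * pUX u x from rfl,
        CardBound5.G2_smul hpS hW _ hinv, ← mul_assoc, mul_inv_cancel₀ hne, one_mul]
  have hPsi_zero : ∀ u ∉ t, Psi u = 0 := by
    intro u hu
    have hne : lam u = 0 := by
      by_contra h
      exact hu (Finset.mem_filter.mpr ⟨Finset.mem_univ u, h⟩)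
    have hzero : ∀ x, pUX u x = 0 := fun x =>
      (Finset.sum_eq_zero_iff_of_nonneg (fun i _ => hpUX.1 u i)).mp hne x (Finset.mem_univ x)
    have hfun : (fun x => pUX u x) = (fun _ => (0:ℝ)) := funext hzero
    rw [hPsidef]
    refine Prod.ext ?_ (Prod.ext ?_ ?_)
    · funext x'; exact hzero x'.1
    · show CardBound5.G1 pS W pX (fun x => pUX u x) = 0
      rw [hfun, CardBound5.G1_zero]
    · show CardBound5.G2 pS W (fun x => pUX u x) = 0
      rw [hfun, CardBound5.G2_zero]
  have hPsi_sum : ∑ u, Psi u = xstar := by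
    refine Prod.ext ?_ (Prod.ext ?_ ?_)
    · rw [Prod.fst_sum]
      funext x'
      rw [Finset.sum_apply]
    · show (∑ u, Psi u).2.1 = rateIUZ pUX pS W
      rw [Prod.snd_sum, Prod.fst_sum]
      exact (CardBound5.rateIUZ_eq hpS hW pUX hpUX.1 pX (fun x => rfl)).symm
    · show (∑ u, Psi u).2.2 = rateIXY_US pUX pS W
      rw [Prod.snd_sum, Prod.snd_sum]
      exact (CardBound5.rateIXY_US_eq hpS hW pUX hpUX.1).symm
  have hxstar : xstar ∈ convexHull ℝ (Φ '' stdSimplex ℝ 𝓧) := by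
    have hcm := Finset.centerMass_mem_convexHull t (fun u _ => hlam0 u)
      (by rw [hsum_t]; norm_num) (z := fun u => Φ (qfun u))
      (fun u hu => Set.mem_image_of_mem Φ (hq u hu))
    rw [Finset.centerMass_eq_of_sum_1 _ _ hsum_t] at hcm
    have heq : ∑ u ∈ t, lam u • Φ (qfun u) = xstar := by
      rw [Finset.sum_congr rfl hlamq]
      rw [← hPsi_sum]
      exact Finset.sum_subset (Finset.subset_univ t)
        (fun u _ hu => hPsi_zero u hu)
    rwa [heq] at hcm
  -- Fenchel–Eggleston reduction
  obtain ⟨T, hTA, hTcard, hTx⟩ := CardBound4.fenchel_eggleston hApc hxstar hfr (by omega)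
  rw [Finset.convexHull_eq] at hTx
  obtain ⟨w, hw0, hw1, hwc⟩ := hTx
  rw [Finset.centerMass_eq_of_sum_1 _ _ hw1] at hwc
  have hchoice : ∀ e ∈ T, ∃ q, q ∈ stdSimplex ℝ 𝓧 ∧ Φ q = e := by
    intro e he
    obtain ⟨q, hq1, hq2⟩ := hTA he
    exact ⟨q, hq1, hq2⟩
  choose Q hQmem hQeq using hchoice
  set k := T.card with hkdef
  have hkcard : Fintype.card {e // e ∈ T} = k := Fintype.card_coe T
  set eT : Fin k ≃ {e // e ∈ T} := (Fintype.equivFinOfCardEq hkcard).symm with heT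
  set pU'X : Fin k → 𝓧 → ℝ := fun j x => w (eT j) * Q (eT j).1 (eT j).2 x with hpU'X
  -- generic: sums over Fin k equal sums over T
  have hsum_conv : ∀ g : (e : F) → e ∈ T → ℝ,
      ∑ j, g (eT j).1 (eT j).2 = ∑ e ∈ T.attach, g e.1 e.2 := by
    intro g
    rw [← Finset.univ_eq_attach]
    exact Equiv.sum_comp eT (fun e => g e.1 e.2)
  -- components of points of T
  have hQ1 : ∀ (e : F) (he : e ∈ T) (x' : {x : 𝓧 // x ≠ x₀}), Q e he x'.1 = e.1 x' := by
    intro e he x'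
    exact congrArg (fun p : F => p.1 x') (hQeq e he)
  have hQ2 : ∀ (e : F) (he : e ∈ T), CardBound5.G1 pS W pX (Q e he) = e.2.1 := by
    intro e he
    exact congrArg (fun p : F => p.2.1) (hQeq e he)
  have hQ3 : ∀ (e : F) (he : e ∈ T), CardBound5.G2 pS W (Q e he) = e.2.2 := by
    intro e he
    exact congrArg (fun p : F => p.2.2) (hQeq e he)
  have hQsum : ∀ (e : F) (he : e ∈ T), ∑ x, Q e he x = 1 := fun e he => (hQmem e he).2
  have hQ0 : ∀ (e : F) (he : e ∈ T) (x : 𝓧), 0 ≤ Q e he x := fun e he => (hQmem e he).1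
  -- components of hwc
  have hc1 : ∀ x' : {x : 𝓧 // x ≠ x₀}, ∑ e ∈ T.attach, w e.1 * e.1.1 x' = pX x'.1 := by
    intro x'
    have h := congrArg Prod.fst hwc
    rw [Prod.fst_sum] at h
    have h' := congrFun h x'
    rw [Finset.sum_apply] at h'
    simp only [id_eq, Prod.smul_fst, Pi.smul_apply, smul_eq_mul] at h'
    rw [Finset.sum_attach T (fun e => w e * e.1 x')]
    exact h'
  have hc2 : ∑ e ∈ T.attach, w e.1 * e.1.2.1 = rateIUZ pUX pS W := by
    have h := congrArg ((LinearMap.fst ℝ ℝ ℝ).comp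
      (LinearMap.snd ℝ ({x : 𝓧 // x ≠ x₀} → ℝ) (ℝ × ℝ))) hwc
    rw [map_sum] at h
    simp only [id_eq, map_smul, smul_eq_mul] at h
    rw [Finset.sum_attach T (fun e => w e * e.2.1)]
    exact h
  have hc3 : ∑ e ∈ T.attach, w e.1 * e.1.2.2 = rateIXY_US pUX pS W := by
    have h := congrArg ((LinearMap.snd ℝ ℝ ℝ).comp
      (LinearMap.snd ℝ ({x : 𝓧 // x ≠ x₀} → ℝ) (ℝ × ℝ))) hwc
    rw [map_sum] at h
    simp only [id_eq, map_smul, smul_eq_mul] at h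
    rw [Finset.sum_attach T (fun e => w e * e.2.2)]
    exact h
  -- the marginal
  have hmarg : ∀ x, ∑ j, pU'X j x = pX x := by
    have hne : ∀ x' : {x : 𝓧 // x ≠ x₀}, ∑ j, pU'X j x'.1 = pX x'.1 := by
      intro x'
      rw [hsum_conv (fun e he => w e * Q e he x'.1)]
      rw [Finset.sum_congr rfl (fun e _ => by rw [hQ1 e.1 e.2 x'])]
      exact hc1 x'
    intro x
    by_cases hx : x = x₀
    · rw [hx]
      have hsplit : ∀ e ∈ T.attach, w e.1 * Q e.1 e.2 x₀
          = w e.1 - ∑ x' ∈ Finset.univ.erase x₀, w e.1 * Q e.1 e.2 x' := by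
        intro e _
        have := hQsum e.1 e.2
        rw [← Finset.sum_erase_add Finset.univ _ (Finset.mem_univ x₀)] at this
        rw [← Finset.mul_sum]
        linear_combination (w e.1) * this
      rw [hsum_conv (fun e he => w e * Q e he x₀), Finset.sum_congr rfl hsplit,
        Finset.sum_sub_distrib]
      have hwsum : ∑ e ∈ T.attach, w e.1 = 1 := by
        rw [Finset.sum_attach T (fun e => w e)]; exact hw1
      rw [hwsum, Finset.sum_comm]
      have herase : ∀ x' ∈ Finset.univ.erase x₀,
          ∑ e ∈ T.attach, w e.1 * Q e.1 e.2 x' = pX x' := by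
        intro x' hx'
        have hx'ne : x' ≠ x₀ := Finset.ne_of_mem_erase hx'
        have := hne ⟨x', hx'ne⟩
        rw [hsum_conv (fun e he => w e * Q e he x')] at this
        exact this
      rw [Finset.sum_congr rfl herase]
      have := Finset.sum_erase_add Finset.univ pX (Finset.mem_univ x₀)
      rw [← hpX1]
      linarith [this]
    · exact hne ⟨x, hx⟩
  -- nonnegativity and normalization of the new pmf
  have hpU'X0 : ∀ j x, 0 ≤ pU'X j x := fun j x =>
    mul_nonneg (hw0 _ (eT j).2) (hQ0 (eT j).1 (eT j).2 x)
  have hpU'X1 : ∑ j, ∑ x, pU'X j x = 1 := by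
    have hj : ∀ j : Fin k, ∑ x, pU'X j x = w (eT j).1 := by
      intro j
      rw [show (∑ x, pU'X j x) = w (eT j).1 * ∑ x, Q (eT j).1 (eT j).2 x from by
        rw [hpU'X]; exact (Finset.mul_sum _ _ _).symm]
      rw [hQsum, mul_one]
    rw [Finset.sum_congr rfl (fun j _ => hj j), hsum_conv (fun e he => w e),
      Finset.sum_attach T w, hw1]
  -- the two rate identities
  have hrate1 : rateIUZ pU'X pS W = rateIUZ pUX pS W := by
    rw [CardBound5.rateIUZ_eq hpS hW pU'X hpU'X0 pX hmarg]
    have hj : ∀ j : Fin k, CardBound5.G1 pS W pX (fun x => pU'X j x)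
        = w (eT j).1 * (eT j).1.2.1 := by
      intro j
      rw [show (fun x => pU'X j x) = fun x => w (eT j).1 * Q (eT j).1 (eT j).2 x from rfl,
        CardBound5.G1_smul hpS hW pX _ (hw0 _ (eT j).2), hQ2 (eT j).1 (eT j).2]
    rw [Finset.sum_congr rfl (fun j _ => hj j), hsum_conv (fun e he => w e * e.2.1)]
    exact hc2
  have hrate2 : rateIXY_US pU'X pS W = rateIXY_US pUX pS W := by
    rw [CardBound5.rateIXY_US_eq hpS hW pU'X hpU'X0]
    have hj : ∀ j : Fin k, CardBound5.G2 pS W (fun x => pU'X j x)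
        = w (eT j).1 * (eT j).1.2.2 := by
      intro j
      rw [show (fun x => pU'X j x) = fun x => w (eT j).1 * Q (eT j).1 (eT j).2 x from rfl,
        CardBound5.G2_smul hpS hW _ (hw0 _ (eT j).2), hQ3 (eT j).1 (eT j).2]
    rw [Finset.sum_congr rfl (fun j _ => hj j), hsum_conv (fun e he => w e * e.2.2)]
    exact hc3
  have hmarg' : ∀ x, ∑ j, pU'X j x = ∑ u, pUX u x := hmarg
  have hrate3 : rateIXY_S (fun x => ∑ j, pU'X j x) pS W
      = rateIXY_S (fun x => ∑ u, pUX u x) pS W := by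
    congr 1
    funext x
    exact hmarg' x
  exact ⟨k, pU'X, hTcard, ⟨hpU'X0, hpU'X1⟩, hmarg', hrate1, hrate2, by
    rw [hrate1, hrate2, hrate3]⟩


end
end

section
/- Equivalence of three rate regions. Fix finite alphabets 𝒳, 𝒮, 𝒴, 𝒵, a state pmf P_S, and a channel law P_{YZ|XS}. For a pmf P_{UX} on 𝒰 × 𝒳 (𝒰 a finite alphabet), let the joint law of (S, U, X, Y, Z) be P_{UX} · P_S · P_{YZ|XS}. Define the sets of nonnegative rate pairs: 𝒜 = ⋃_{P_{UX}} {(R0, R1) : R0 ≤ I(U; Z), R1 ≤ I(X; Y | U, S), R0 + R1 ≤ I(X; Y | S)}, ℬ = ⋃_{P_{UX}} {(R0, R1) : R0 ≤ I(U; Z), R0 + R1 ≤ I(X; Y | U, S) + I(U; Z), R0 + R1 ≤ I(X; Y | S)}, and 𝒞 = ⋃_{P_{UX}} {(R0, R1) : R0 ≤ min{I(U; Z), I(U; Y | S)}, R1 ≤ I(X; Y | U, S)}. Then 𝒜 = ℬ = 𝒞. -/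
open scoped BigOperators
open Filter

noncomputable section

set_option linter.unusedSectionVars false

section AuxGeneric

/-- expanding a grouped term -/
lemma sum_if_expand {ι : Type*} [Fintype ι] (q : ι → ℝ) (hq : ∀ i, 0 ≤ q i) (r : ℝ) :
    (if (∑ i, q i) = 0 then 0 else (∑ i, q i) * r) = ∑ i, (if q i = 0 then 0 else q i * r) := by
  by_cases h : (∑ i, q i) = 0
  · rw [if_pos h]
    have : ∀ i ∈ Finset.univ, q i = 0 :=
      (Finset.sum_eq_zero_iff_of_nonneg (fun i _ => hq i)).1 h
    symm
    apply Finset.sum_eq_zero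
    intro i hi
    rw [if_pos (this i hi)]
  · rw [if_neg h]
    rw [Finset.sum_mul]
    apply Finset.sum_congr rfl
    intro i _
    by_cases hqi : q i = 0
    · simp [hqi]
    · rw [if_neg hqi]

lemma CMI_nonneg {C A B : Type*} [Fintype C] [Fintype A] [Fintype B]
    (p : C → A → B → ℝ) (hp : ∀ c a b, 0 ≤ p c a b) : 0 ≤ CMI p := by
  unfold CMI
  apply Finset.sum_nonneg
  intro c _
  set T : ℝ := ∑ a, ∑ b, p c a b with hT
  by_cases hT0 : T = 0
  · have hz : ∀ a b, p c a b = 0 := by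
      intro a b
      have h1 : ∀ a ∈ Finset.univ, (0:ℝ) ≤ ∑ b, p c a b :=
        fun a _ => Finset.sum_nonneg (fun b _ => hp c a b)
      have h3 : ∀ a ∈ Finset.univ, (∑ b, p c a b) = 0 :=
        (Finset.sum_eq_zero_iff_of_nonneg h1).1 hT0
      exact (Finset.sum_eq_zero_iff_of_nonneg
        (fun b _ => hp c a b)).1 (h3 a (Finset.mem_univ a)) b (Finset.mem_univ b)
    apply Finset.sum_nonneg; intro a _; apply Finset.sum_nonneg; intro b _
    simp [hz a b]
  · have hTpos : 0 < T := lt_of_le_of_ne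
      (Finset.sum_nonneg fun a _ => Finset.sum_nonneg fun b _ => hp c a b) (Ne.symm hT0)
    have hl2 : 0 < Real.log 2 := Real.log_pos (by norm_num)
    have key : ∀ a b, (p c a b - (if p c a b = 0 then 0
          else (∑ b', p c a b') * (∑ a', p c a' b) / T)) / Real.log 2 ≤
        (if p c a b = 0 then 0
        else p c a b * Real.logb 2
          (T * p c a b / ((∑ b', p c a b') * (∑ a', p c a' b)))) := by
      intro a b
      by_cases h0 : p c a b = 0
      · simp [h0]
      · rw [if_neg h0, if_neg h0]
        have hpb : 0 < p c a b := lt_of_le_of_ne (hp c a b) (Ne.symm h0)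
        have hma : 0 < ∑ b', p c a b' :=
          lt_of_lt_of_le hpb (Finset.single_le_sum (fun b' _ => hp c a b') (Finset.mem_univ b))
        have hmb : 0 < ∑ a', p c a' b :=
          lt_of_lt_of_le hpb (Finset.single_le_sum (fun a' _ => hp c a' b) (Finset.mem_univ a))
        set t : ℝ := T * p c a b / ((∑ b', p c a b') * (∑ a', p c a' b)) with ht
        have htpos : 0 < t := by positivity
        have hlog : 1 - 1/t ≤ Real.log t := by
          have h := Real.log_le_sub_one_of_pos (show (0:ℝ) < 1/t by positivity)
          rw [one_div, Real.log_inv] at h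
          rw [one_div]
          linarith
        have hlogb : Real.logb 2 t = Real.log t / Real.log 2 := rfl
        rw [hlogb, div_le_iff₀ hl2]
        have hre : p c a b * (Real.log t / Real.log 2) * Real.log 2 = p c a b * Real.log t := by
          field_simp
        rw [hre]
        have h1t : p c a b * (1 - 1/t) = p c a b - (∑ b', p c a b') * (∑ a', p c a' b) / T := by
          rw [ht]
          field_simp
        calc p c a b - (∑ b', p c a b') * (∑ a', p c a' b) / T
            = p c a b * (1 - 1/t) := h1t.symm
          _ ≤ p c a b * Real.log t := by
              apply mul_le_mul_of_nonneg_left _ (le_of_lt hpb)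
              exact hlog
    have lower : 0 ≤ ∑ a, ∑ b, (p c a b - (if p c a b = 0 then 0
        else (∑ b', p c a b') * (∑ a', p c a' b) / T)) := by
      have h1 : ∑ a, ∑ b, (p c a b - (if p c a b = 0 then 0
          else (∑ b', p c a b') * (∑ a', p c a' b) / T)) =
          T - ∑ a, ∑ b, (if p c a b = 0 then 0
          else (∑ b', p c a b') * (∑ a', p c a' b) / T) := by
        rw [hT]
        rw [← Finset.sum_sub_distrib]
        apply Finset.sum_congr rfl; intro a _
        rw [← Finset.sum_sub_distrib]
      have h2 : ∑ a, ∑ b, (if p c a b = 0 then 0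
          else (∑ b', p c a b') * (∑ a', p c a' b) / T) ≤
          ∑ a, ∑ b, (∑ b', p c a b') * (∑ a', p c a' b) / T := by
        apply Finset.sum_le_sum; intro a _
        apply Finset.sum_le_sum; intro b _
        by_cases h0 : p c a b = 0
        · rw [if_pos h0]
          apply div_nonneg _ hTpos.le
          exact mul_nonneg (Finset.sum_nonneg fun b' _ => hp c a b')
            (Finset.sum_nonneg fun a' _ => hp c a' b)
        · rw [if_neg h0]
      have hsum : ∑ a, ∑ b, (∑ b', p c a b') * (∑ a', p c a' b) = T * T := by
        rw [← Finset.sum_mul_sum]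
        congr 1
        rw [hT]
        exact Finset.sum_comm ..
      have h3 : ∑ a, ∑ b, (∑ b', p c a b') * (∑ a', p c a' b) / T = T := by
        have e1 : ∑ a, ∑ b, (∑ b', p c a b') * (∑ a', p c a' b) / T
            = (∑ a, ∑ b, (∑ b', p c a b') * (∑ a', p c a' b)) / T := by
          rw [Finset.sum_div]
          exact Finset.sum_congr rfl (fun a _ => (Finset.sum_div _ _ _).symm)
        rw [e1, hsum]
        field_simp
      linarith
    calc (0:ℝ) ≤ (∑ a, ∑ b, (p c a b - (if p c a b = 0 then 0
          else (∑ b', p c a b') * (∑ a', p c a' b) / T))) / Real.log 2 :=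
          div_nonneg lower (le_of_lt hl2)
      _ ≤ _ := by
          rw [Finset.sum_div]
          apply Finset.sum_le_sum; intro a _
          rw [Finset.sum_div]
          apply Finset.sum_le_sum; intro b _
          exact key a b

lemma MI_comp_left {A A' B : Type*} [Fintype A] [Fintype A'] [Fintype B]
    (p : A → B → ℝ) (e : A' ≃ A) : MI (fun a b => p (e a) b) = MI p := by
  unfold MI
  rw [← Equiv.sum_comp e (fun a => ∑ b, if p a b = 0 then 0
    else p a b * Real.logb 2 (p a b / ((∑ b', p a b') * (∑ a', p a' b))))]
  apply Finset.sum_congr rfl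
  intro a _
  apply Finset.sum_congr rfl
  intro b _
  have h : ∀ b, (∑ a', p (e a') b) = ∑ a', p a' b := fun b => Equiv.sum_comp e (fun a => p a b)
  rw [h]

lemma CMI_comp_c {C C' A B : Type*} [Fintype C] [Fintype C'] [Fintype A] [Fintype B]
    (p : C → A → B → ℝ) (e : C' ≃ C) : CMI (fun c a b => p (e c) a b) = CMI p := by
  unfold CMI
  exact Equiv.sum_comp e (fun c => ∑ a, ∑ b, if p c a b = 0 then 0
    else p c a b * Real.logb 2
      ((∑ a', ∑ b', p c a' b') * p c a b / ((∑ b', p c a b') * (∑ a', p c a' b))))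

lemma CMI_comp_a {C A A' B : Type*} [Fintype C] [Fintype A] [Fintype A'] [Fintype B]
    (p : C → A → B → ℝ) (e : A' ≃ A) : CMI (fun c a b => p c (e a) b) = CMI p := by
  unfold CMI
  apply Finset.sum_congr rfl
  intro c _
  rw [← Equiv.sum_comp e (fun a => ∑ b, if p c a b = 0 then 0
    else p c a b * Real.logb 2
      ((∑ a', ∑ b', p c a' b') * p c a b / ((∑ b', p c a b') * (∑ a', p c a' b))))]
  apply Finset.sum_congr rfl
  intro a _
  apply Finset.sum_congr rfl
  intro b _
  have h1 : (∑ a', ∑ b', p c (e a') b') = ∑ a', ∑ b', p c a' b' :=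
    Equiv.sum_comp e (fun a => ∑ b', p c a b')
  have h2 : ∀ b, (∑ a', p c (e a') b) = ∑ a', p c a' b := fun b => Equiv.sum_comp e (fun a => p c a b)
  rw [h1, h2]

lemma CMI_determined {C A B : Type*} [Fintype C] [Fintype A] [Fintype B]
    (p : C → A → B → ℝ) (hp : ∀ c a b, 0 ≤ p c a b) (a0 : C → A)
    (hd : ∀ c a b, a ≠ a0 c → p c a b = 0) : CMI p = 0 := by
  unfold CMI
  apply Finset.sum_eq_zero; intro c _
  apply Finset.sum_eq_zero; intro a _
  apply Finset.sum_eq_zero; intro b _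
  by_cases h0 : p c a b = 0
  · rw [if_pos h0]
  · rw [if_neg h0]
    have ha : a = a0 c := by
      by_contra hne
      exact h0 (hd c a b hne)
    have hd' : ∀ a' b', a' ≠ a → p c a' b' = 0 := fun a' b' hne => hd c a' b' (ha ▸ hne)
    have hpb : 0 < p c a b := lt_of_le_of_ne (hp c a b) (Ne.symm h0)
    have h1 : (∑ a', ∑ b', p c a' b') = ∑ b', p c a b' := by
      apply Finset.sum_eq_single a
      · intro a' _ hne
        exact Finset.sum_eq_zero fun b' _ => hd' a' b' hne
      · intro h; exact absurd (Finset.mem_univ a) h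
    have h2 : (∑ a', p c a' b) = p c a b := by
      apply Finset.sum_eq_single a
      · intro a' _ hne; exact hd' a' b hne
      · intro h; exact absurd (Finset.mem_univ a) h
    rw [h1, h2]
    have hma : 0 < ∑ b', p c a b' :=
      lt_of_lt_of_le hpb (Finset.single_le_sum (fun b' _ => hp c a b') (Finset.mem_univ b))
    rw [div_self (ne_of_gt (mul_pos hma hpb))]
    simp

lemma CMI_subsingleton_a {C A B : Type*} [Fintype C] [Fintype A] [Fintype B]
    [Subsingleton A] [Nonempty A]
    (p : C → A → B → ℝ) (hp : ∀ c a b, 0 ≤ p c a b) : CMI p = 0 := by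
  apply CMI_determined p hp (fun _ => Classical.arbitrary A)
  intro c a b hne
  exact absurd (Subsingleton.elim a _) hne

lemma CMI_smul {C A B : Type*} [Fintype C] [Fintype A] [Fintype B]
    (p : C → A → B → ℝ) (l : ℝ) (hl : 0 ≤ l) :
    CMI (fun c a b => l * p c a b) = l * CMI p := by
  rcases eq_or_lt_of_le hl with h | h
  · simp [CMI, ← h]
  unfold CMI
  rw [Finset.mul_sum]
  apply Finset.sum_congr rfl; intro c _
  rw [Finset.mul_sum]
  apply Finset.sum_congr rfl; intro a _
  rw [Finset.mul_sum]
  apply Finset.sum_congr rfl; intro b _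
  have hln : l ≠ 0 := ne_of_gt h
  by_cases h0 : p c a b = 0
  · simp [h0]
  · rw [if_neg (by simp [hln, h0] : ¬ l * p c a b = 0), if_neg h0]
    have e1 : (∑ a', ∑ b', l * p c a' b') = l * ∑ a', ∑ b', p c a' b' := by
      rw [Finset.mul_sum]
      exact Finset.sum_congr rfl fun a' _ => (Finset.mul_sum _ _ _).symm
    have e2 : (∑ b', l * p c a b') = l * ∑ b', p c a b' := (Finset.mul_sum _ _ _).symm
    have e3 : (∑ a', l * p c a' b) = l * ∑ a', p c a' b := (Finset.mul_sum _ _ _).symm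
    rw [e1, e2, e3]
    set A1 := ∑ a', ∑ b', p c a' b'
    set A2 := ∑ b', p c a b'
    set A3 := ∑ a', p c a' b
    have harg : l * A1 * (l * p c a b) / (l * A2 * (l * A3)) =
        A1 * p c a b / (A2 * A3) := by
      have n1 : l * A1 * (l * p c a b) = (l * l) * (A1 * p c a b) := by ring
      have n2 : l * A2 * (l * A3) = (l * l) * (A2 * A3) := by ring
      rw [n1, n2, mul_div_mul_left _ _ (mul_ne_zero hln hln)]
    rw [harg]
    ring

lemma CMI_chain_flat {C A₁ A₂ B : Type*} [Fintype C] [Fintype A₁] [Fintype A₂] [Fintype B]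
    (q : C → A₁ → A₂ → B → ℝ) (hq : ∀ c a1 a2 b, 0 ≤ q c a1 a2 b) :
    CMI (fun c (a : A₁ × A₂) b => q c a.1 a.2 b)
      = CMI (fun c a1 b => ∑ a2, q c a1 a2 b)
      + CMI (fun (ca : C × A₁) a2 b => q ca.1 ca.2 a2 b) := by
  unfold CMI
  simp only [Fintype.sum_prod_type]
  rw [← Finset.sum_add_distrib]
  apply Finset.sum_congr rfl; intro c _
  rw [← Finset.sum_add_distrib]
  apply Finset.sum_congr rfl; intro a1 _
  -- expand the (c,a1,b) middle term over a2
  have hU : ∀ b, (if (∑ a2, q c a1 a2 b) = 0 then 0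
      else (∑ a2, q c a1 a2 b) * Real.logb 2
        ((∑ a1', ∑ b', ∑ a2', q c a1' a2' b') * (∑ a2', q c a1 a2' b) /
          ((∑ b', ∑ a2', q c a1 a2' b') * (∑ a1', ∑ a2', q c a1' a2' b)))) =
      ∑ a2, (if q c a1 a2 b = 0 then 0
      else q c a1 a2 b * Real.logb 2
        ((∑ a1', ∑ b', ∑ a2', q c a1' a2' b') * (∑ a2', q c a1 a2' b) /
          ((∑ b', ∑ a2', q c a1 a2' b') * (∑ a1', ∑ a2', q c a1' a2' b)))) := by
    intro b
    exact sum_if_expand (fun a2 => q c a1 a2 b) (fun a2 => hq c a1 a2 b) _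
  simp only [hU]
  rw [Finset.sum_comm (γ := B) (α := A₂)]
  rw [← Finset.sum_add_distrib]
  apply Finset.sum_congr rfl; intro a2 _
  rw [← Finset.sum_add_distrib]
  apply Finset.sum_congr rfl; intro b _
  by_cases h0 : q c a1 a2 b = 0
  · simp [h0]
  · rw [if_neg h0, if_neg h0, if_neg h0]
    have hpos : 0 < q c a1 a2 b := lt_of_le_of_ne (hq c a1 a2 b) (Ne.symm h0)
    have hm : 0 < ∑ b', q c a1 a2 b' :=
      lt_of_lt_of_le hpos (Finset.single_le_sum (fun b' _ => hq c a1 a2 b') (Finset.mem_univ b))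
    have hu : 0 < ∑ a2', q c a1 a2' b :=
      lt_of_lt_of_le hpos (Finset.single_le_sum (fun a2' _ => hq c a1 a2' b) (Finset.mem_univ a2))
    have hT2 : 0 < ∑ a2', ∑ b', q c a1 a2' b' :=
      lt_of_lt_of_le hm (Finset.single_le_sum
        (fun a2' _ => Finset.sum_nonneg fun b' _ => hq c a1 a2' b') (Finset.mem_univ a2))
    have hnL : 0 < ∑ a1', ∑ a2', q c a1' a2' b :=
      lt_of_lt_of_le hu (Finset.single_le_sum
        (fun a1' _ => Finset.sum_nonneg fun a2' _ => hq c a1' a2' b) (Finset.mem_univ a1))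
    have hTL : 0 < ∑ a1', ∑ a2', ∑ b', q c a1' a2' b' :=
      lt_of_lt_of_le hT2 (Finset.single_le_sum
        (fun a1' _ => Finset.sum_nonneg fun a2' _ => Finset.sum_nonneg fun b' _ => hq c a1' a2' b')
        (Finset.mem_univ a1))
    -- normalize sum orders
    have hord1 : (∑ a1', ∑ b', ∑ a2', q c a1' a2' b') = ∑ a1', ∑ a2', ∑ b', q c a1' a2' b' :=
      Finset.sum_congr rfl fun a1' _ => Finset.sum_comm ..
    have hord2 : (∑ b', ∑ a2', q c a1 a2' b') = ∑ a2', ∑ b', q c a1 a2' b' :=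
      Finset.sum_comm ..
    rw [hord1, hord2]
    rw [← mul_add]
    congr 1
    rw [← Real.logb_mul (by positivity) (by positivity)]
    congr 1
    field_simp

lemma MI_eq_CMI_unit {A B : Type*} [Fintype A] [Fintype B] (p : A → B → ℝ)
    (hmass : ∑ a, ∑ b, p a b = 1) :
    MI p = CMI (fun (_ : Unit) a b => p a b) := by
  unfold MI CMI
  have hu : ∀ f : Unit → ℝ, (∑ u : Unit, f u) = f () := fun f => by simp
  rw [hu]
  simp only [hmass, one_mul]

lemma CMI_fiber {C A' A B : Type*} [Fintype C] [Fintype A'] [Fintype A] [Fintype B]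
    [DecidableEq A] (φ : A' → A) (w : A' → ℝ) (g : C → A → B → ℝ)
    (hw : ∀ a', 0 ≤ w a') (hg : ∀ c a b, 0 ≤ g c a b) :
    CMI (fun c a' b => w a' * g c (φ a') b)
      = CMI (fun c a b => (∑ a', if φ a' = a then w a' else 0) * g c a b) := by
  have fib : ∀ f : A → ℝ, ∑ a, (∑ a', if φ a' = a then w a' else 0) * f a
      = ∑ a', w a' * f (φ a') := by
    intro f
    calc ∑ a, (∑ a', if φ a' = a then w a' else 0) * f a
        = ∑ a, ∑ a', (if φ a' = a then w a' * f a else 0) := by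
          apply Finset.sum_congr rfl; intro a _
          rw [Finset.sum_mul]
          apply Finset.sum_congr rfl; intro a' _
          rw [ite_mul, zero_mul]
      _ = ∑ a', ∑ a, (if φ a' = a then w a' * f a else 0) := Finset.sum_comm ..
      _ = ∑ a', w a' * f (φ a') := by
          apply Finset.sum_congr rfl; intro a' _
          rw [Finset.sum_ite_eq Finset.univ (φ a') (fun a => w a' * f a)]
          simp
  unfold CMI
  apply Finset.sum_congr rfl; intro c _
  -- abbreviations for marginals of the coarse joint
  have hWpos : ∀ a, 0 ≤ ∑ a', (if φ a' = a then w a' else 0) := by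
    intro a
    apply Finset.sum_nonneg; intro a' _
    split <;> simp [hw a']
  -- expand each coarse term over the fiber
  have expand : ∀ a b,
      (if (∑ a', if φ a' = a then w a' else 0) * g c a b = 0 then 0
        else ((∑ a', if φ a' = a then w a' else 0) * g c a b) * Real.logb 2
          ((∑ a'', ∑ b'', (∑ a', if φ a' = a'' then w a' else 0) * g c a'' b'') *
              ((∑ a', if φ a' = a then w a' else 0) * g c a b) /
            ((∑ b'', (∑ a', if φ a' = a then w a' else 0) * g c a b'') *
              (∑ a'', (∑ a', if φ a' = a'' then w a' else 0) * g c a'' b))))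
      = ∑ a', (if (if φ a' = a then w a' else 0) * g c a b = 0 then 0
        else ((if φ a' = a then w a' else 0) * g c a b) * Real.logb 2
          ((∑ a'', ∑ b'', (∑ a''', if φ a''' = a'' then w a''' else 0) * g c a'' b'') *
              ((∑ a''', if φ a''' = a then w a''' else 0) * g c a b) /
            ((∑ b'', (∑ a''', if φ a''' = a then w a''' else 0) * g c a b'') *
              (∑ a'', (∑ a''', if φ a''' = a'' then w a''' else 0) * g c a'' b)))) := by
    intro a b
    have := sum_if_expand (fun a' => (if φ a' = a then w a' else 0) * g c a b)
      (fun a' => mul_nonneg (by split <;> simp [hw a']) (hg c a b)) (Real.logb 2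
          ((∑ a'', ∑ b'', (∑ a''', if φ a''' = a'' then w a''' else 0) * g c a'' b'') *
              ((∑ a''', if φ a''' = a then w a''' else 0) * g c a b) /
            ((∑ b'', (∑ a''', if φ a''' = a then w a''' else 0) * g c a b'') *
              (∑ a'', (∑ a''', if φ a''' = a'' then w a''' else 0) * g c a'' b))))
    rw [← Finset.sum_mul] at this
    exact this
  simp only [expand]
  -- reorder and collapse the fiber sum
  have reorder : ∀ F : A → B → A' → ℝ, (∑ a, ∑ b, ∑ a', F a b a') = ∑ a', ∑ b, ∑ a, F a b a' := by
    intro F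
    calc ∑ a, ∑ b, ∑ a', F a b a'
        = ∑ a, ∑ a', ∑ b, F a b a' := Finset.sum_congr rfl fun a _ => Finset.sum_comm ..
      _ = ∑ a', ∑ a, ∑ b, F a b a' := Finset.sum_comm ..
      _ = ∑ a', ∑ b, ∑ a, F a b a' := Finset.sum_congr rfl fun a' _ => Finset.sum_comm ..
  rw [reorder]
  apply Finset.sum_congr rfl; intro a' _
  apply Finset.sum_congr rfl; intro b _
  rw [Finset.sum_eq_single (φ a')]
  · rw [if_pos (rfl : φ a' = φ a')]
    by_cases hz : w a' * g c (φ a') b = 0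
    · rw [if_pos hz, if_pos hz]
    · rw [if_neg hz, if_neg hz]
      congr 1
      congr 1
      have hwpos : 0 < w a' := by
        rcases (mul_ne_zero_iff.1 hz) with ⟨h1, _⟩
        exact lt_of_le_of_ne (hw a') (Ne.symm h1)
      have hgpos : 0 < g c (φ a') b := by
        rcases (mul_ne_zero_iff.1 hz) with ⟨_, h2⟩
        exact lt_of_le_of_ne (hg c (φ a') b) (Ne.symm h2)
      have hWpos' : 0 < ∑ a''', (if φ a''' = φ a' then w a''' else 0) := by
        apply lt_of_lt_of_le hwpos
        have he : w a' = (if φ a' = φ a' then w a' else 0) := by rw [if_pos rfl]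
        rw [he]
        exact Finset.single_le_sum (f := fun x => if φ x = φ a' then w x else 0) (fun x _ => by split <;> simp [hw]) (Finset.mem_univ a')
      have hpb : (∑ a'', (∑ a''', if φ a''' = a'' then w a''' else 0) * g c a'' b)
          = ∑ a'', w a'' * g c (φ a'') b := fib (fun a => g c a b)
      have hT : (∑ a'', ∑ b'', (∑ a''', if φ a''' = a'' then w a''' else 0) * g c a'' b'')
          = ∑ a'', ∑ b'', w a'' * g c (φ a'') b'' := by
        have e1 : ∀ a'', (∑ b'', (∑ a''', if φ a''' = a'' then w a''' else 0) * g c a'' b'')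
            = (∑ a''', if φ a''' = a'' then w a''' else 0) * ∑ b'', g c a'' b'' :=
          fun a'' => (Finset.mul_sum _ _ _).symm
        simp only [e1]
        rw [fib (fun a => ∑ b'', g c a b'')]
        exact Finset.sum_congr rfl fun a'' _ => Finset.mul_sum _ _ _
      have hmbW : (∑ b'', (∑ a''', if φ a''' = φ a' then w a''' else 0) * g c (φ a') b'')
          = (∑ a''', if φ a''' = φ a' then w a''' else 0) * ∑ b'', g c (φ a') b'' :=
        (Finset.mul_sum _ _ _).symm
      have hmbw : (∑ b'', w a' * g c (φ a') b'') = w a' * ∑ b'', g c (φ a') b'' :=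
        (Finset.mul_sum _ _ _).symm
      rw [hpb, hT, hmbW, hmbw]
      set TT := ∑ a'', ∑ b'', w a'' * g c (φ a'') b''
      set P := ∑ a'', w a'' * g c (φ a'') b
      set sb := ∑ b'', g c (φ a') b''
      set WW := ∑ a''', (if φ a''' = φ a' then w a''' else 0)
      have e2 : TT * (w a' * g c (φ a') b) / (w a' * sb * P)
          = TT * g c (φ a') b / (sb * P) := by
        have n1 : TT * (w a' * g c (φ a') b) = w a' * (TT * g c (φ a') b) := by ring
        have n2 : w a' * sb * P = w a' * (sb * P) := by ring
        rw [n1, n2, mul_div_mul_left _ _ (ne_of_gt hwpos)]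
      have e3 : TT * (WW * g c (φ a') b) / (WW * sb * P)
          = TT * g c (φ a') b / (sb * P) := by
        have n1 : TT * (WW * g c (φ a') b) = WW * (TT * g c (φ a') b) := by ring
        have n2 : WW * sb * P = WW * (sb * P) := by ring
        rw [n1, n2, mul_div_mul_left _ _ (ne_of_gt hWpos')]
      rw [e2, e3]
  · intro a _ hne
    have hz : (if φ a' = a then w a' else 0) = 0 := by
      rw [if_neg (fun h => hne h.symm)]
    rw [hz, zero_mul]
    rw [if_pos rfl]
  · intro h
    exact absurd (Finset.mem_univ (φ a')) h

lemma scale_rowMI {Z : Type*} [Fintype Z] (J : Z → ℝ) (ζ : Z → ℝ) (l : ℝ) (hl : 0 ≤ l) :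
    (∑ z, if l * J z = 0 then 0 else
      (l * J z) * Real.logb 2 ((l * J z) / ((∑ z', l * J z') * ζ z)))
    = l * ∑ z, (if J z = 0 then 0 else
      J z * Real.logb 2 (J z / ((∑ z', J z') * ζ z))) := by
  rcases eq_or_lt_of_le hl with h | h
  · simp [← h]
  rw [Finset.mul_sum]
  apply Finset.sum_congr rfl; intro z _
  have hln : l ≠ 0 := ne_of_gt h
  by_cases h0 : J z = 0
  · simp [h0]
  · rw [if_neg (by simp [hln, h0]), if_neg h0]
    have hs : (∑ z', l * J z') = l * ∑ z', J z' := (Finset.mul_sum _ _ _).symm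
    rw [hs]
    have harg : l * J z / (l * (∑ z', J z') * ζ z) = J z / ((∑ z', J z') * ζ z) := by
      have n2 : l * (∑ z', J z') * ζ z = l * ((∑ z', J z') * ζ z) := by ring
      rw [n2, mul_div_mul_left _ _ hln]
    rw [harg]
    ring

lemma scale_rowCMI {Z : Type*} [Fintype Z] (J : Z → ℝ) (T : ℝ) (ζ : Z → ℝ) (l : ℝ) (hl : 0 ≤ l) :
    (∑ z, if l * J z = 0 then 0 else
      (l * J z) * Real.logb 2 (T * (l * J z) / ((∑ z', l * J z') * ζ z)))
    = l * ∑ z, (if J z = 0 then 0 else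
      J z * Real.logb 2 (T * J z / ((∑ z', J z') * ζ z))) := by
  rcases eq_or_lt_of_le hl with h | h
  · simp [← h]
  rw [Finset.mul_sum]
  apply Finset.sum_congr rfl; intro z _
  have hln : l ≠ 0 := ne_of_gt h
  by_cases h0 : J z = 0
  · simp [h0]
  · rw [if_neg (by simp [hln, h0]), if_neg h0]
    have hs : (∑ z', l * J z') = l * ∑ z', J z' := (Finset.mul_sum _ _ _).symm
    rw [hs]
    have harg : T * (l * J z) / (l * (∑ z', J z') * ζ z) = T * J z / ((∑ z', J z') * ζ z) := by
      have n1 : T * (l * J z) = l * (T * J z) := by ring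
      have n2 : l * (∑ z', J z') * ζ z = l * ((∑ z', J z') * ζ z) := by ring
      rw [n1, n2, mul_div_mul_left _ _ hln]
    rw [harg]
    ring

lemma MI_mix {A B Z : Type*} [Fintype A] [Fintype B] [Fintype Z]
    (J1 : A → Z → ℝ) (J2 : B → Z → ℝ) (l : ℝ) (hl0 : 0 ≤ l) (hl1 : l ≤ 1)
    (hcol : ∀ z, ∑ a, J1 a z = ∑ b, J2 b z) :
    MI (fun (ab : A ⊕ B) z => Sum.elim (fun a => l * J1 a z) (fun b => (1-l) * J2 b z) ab)
      = l * MI J1 + (1-l) * MI J2 := by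
  unfold MI
  rw [Fintype.sum_sum_type]
  have hin : ∀ z, (∑ ab : A ⊕ B,
      Sum.elim (fun a => l * J1 a z) (fun b => (1-l) * J2 b z) ab) = ∑ a, J1 a z := by
    intro z
    rw [Fintype.sum_sum_type]
    simp only [Sum.elim_inl, Sum.elim_inr]
    rw [← Finset.mul_sum, ← Finset.mul_sum, ← hcol z]
    ring
  simp only [Sum.elim_inl, Sum.elim_inr, hin]
  congr 1
  · rw [Finset.mul_sum]
    apply Finset.sum_congr rfl; intro a _
    rw [← scale_rowMI (J1 a) (fun z => ∑ a', J1 a' z) l hl0]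
  · rw [Finset.mul_sum]
    apply Finset.sum_congr rfl; intro b _
    simp only [← hcol]
    rw [← scale_rowMI (J2 b) (fun z => ∑ a', J1 a' z) (1-l) (by linarith)]

lemma CMI_mix_a {C A B Y : Type*} [Fintype C] [Fintype A] [Fintype B] [Fintype Y]
    (p1 : C → A → Y → ℝ) (p2 : C → B → Y → ℝ) (l : ℝ) (hl0 : 0 ≤ l) (hl1 : l ≤ 1)
    (hcol : ∀ c y, ∑ a, p1 c a y = ∑ b, p2 c b y) :
    CMI (fun c (ab : A ⊕ B) y =>
        Sum.elim (fun a => l * p1 c a y) (fun b => (1-l) * p2 c b y) ab)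
      = l * CMI p1 + (1-l) * CMI p2 := by
  unfold CMI
  simp only []
  have hmulsum : ∀ (r : ℝ) (f : C → ℝ), r * ∑ c, f c = ∑ c, r * f c := fun r f => Finset.mul_sum _ _ _
  rw [hmulsum, hmulsum, ← Finset.sum_add_distrib]
  apply Finset.sum_congr rfl; intro c _
  rw [Fintype.sum_sum_type]
  have hT : (∑ b, ∑ y, p2 c b y) = ∑ a, ∑ y, p1 c a y := by
    rw [Finset.sum_comm]
    rw [show (∑ a, ∑ y, p1 c a y) = ∑ y, ∑ a, p1 c a y from Finset.sum_comm ..]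
    exact Finset.sum_congr rfl fun y _ => (hcol c y).symm
  have hTm : (∑ ab : A ⊕ B, ∑ y, Sum.elim (fun a => l * p1 c a y) (fun b => (1-l) * p2 c b y) ab)
      = ∑ a, ∑ y, p1 c a y := by
    rw [Fintype.sum_sum_type]
    simp only [Sum.elim_inl, Sum.elim_inr]
    have e1 : (∑ a, ∑ y, l * p1 c a y) = l * ∑ a, ∑ y, p1 c a y := by
      rw [Finset.mul_sum]
      exact Finset.sum_congr rfl fun a _ => (Finset.mul_sum _ _ _).symm
    have e2 : (∑ b, ∑ y, (1-l) * p2 c b y) = (1-l) * ∑ b, ∑ y, p2 c b y := by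
      rw [Finset.mul_sum]
      exact Finset.sum_congr rfl fun b _ => (Finset.mul_sum _ _ _).symm
    rw [e1, e2, hT]
    ring
  have hin : ∀ y, (∑ ab : A ⊕ B,
      Sum.elim (fun a => l * p1 c a y) (fun b => (1-l) * p2 c b y) ab) = ∑ a, p1 c a y := by
    intro y
    rw [Fintype.sum_sum_type]
    simp only [Sum.elim_inl, Sum.elim_inr]
    rw [← Finset.mul_sum, ← Finset.mul_sum, ← hcol c y]
    ring
  simp only [Sum.elim_inl, Sum.elim_inr, hin, hTm]
  congr 1
  · rw [Finset.mul_sum]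
    apply Finset.sum_congr rfl; intro a _
    rw [← scale_rowCMI (p1 c a) (∑ a, ∑ y, p1 c a y) (fun y => ∑ a', p1 c a' y) l hl0]
  · rw [Finset.mul_sum]
    apply Finset.sum_congr rfl; intro b _
    simp only [← hcol c, hT]
    rw [← scale_rowCMI (p2 c b) (∑ a, ∑ y, p1 c a y) (fun y => ∑ a', p1 c a' y)
      (1-l) (by linarith)]

lemma MI_unique_left {A Z : Type*} [Fintype A] [Fintype Z] [Unique A]
    (J : A → Z → ℝ) (hmass : ∀ a, ∑ z, J a z = 1) : MI J = 0 := by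
  unfold MI
  apply Finset.sum_eq_zero; intro a _
  apply Finset.sum_eq_zero; intro z _
  by_cases h0 : J a z = 0
  · rw [if_pos h0]
  · rw [if_neg h0]
    have h1 : (∑ a', J a' z) = J a z := by
      rw [show a = default from Unique.eq_default a]
      exact Fintype.sum_unique _
    rw [h1, hmass a, one_mul, div_self h0, Real.logb_one, mul_zero]

lemma CMI_sum_c {C D A B : Type*} [Fintype C] [Fintype D] [Fintype A] [Fintype B]
    (p : C ⊕ D → A → B → ℝ) :
    CMI p = CMI (fun c => p (Sum.inl c)) + CMI (fun d => p (Sum.inr d)) := by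
  unfold CMI
  rw [Fintype.sum_sum_type]

attribute [irreducible] MI CMI


end AuxGeneric

section AuxRates

variable {U 𝓧 𝓢 𝓨 𝓩 : Type*} [Fintype U] [Fintype 𝓧] [Fintype 𝓢] [Fintype 𝓨] [Fintype 𝓩]
variable (pS : 𝓢 → ℝ) (W : 𝓧 → 𝓢 → 𝓨 × 𝓩 → ℝ)

/-- reorder: bring an outer sum innermost (4 indices) -/
lemma sum_push4 {A S X Y : Type*} [Fintype A] [Fintype S] [Fintype X] [Fintype Y]
    (F : A → S → X → Y → ℝ) :
    ∑ a, ∑ s, ∑ x, ∑ y, F a s x y = ∑ s, ∑ x, ∑ y, ∑ a, F a s x y := by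
  rw [Finset.sum_comm]
  apply Finset.sum_congr rfl; intro s _
  rw [Finset.sum_comm]
  apply Finset.sum_congr rfl; intro x _
  rw [Finset.sum_comm]

lemma sum_push3 {A S X : Type*} [Fintype A] [Fintype S] [Fintype X]
    (F : A → S → X → ℝ) :
    ∑ a, ∑ s, ∑ x, F a s x = ∑ s, ∑ x, ∑ a, F a s x := by
  rw [Finset.sum_comm]
  apply Finset.sum_congr rfl; intro s _
  rw [Finset.sum_comm]

/-- total mass of the (u,z) joint -/
lemma mass_UZ (hpS : IsPMF pS) (hW : IsChan2 W)
    {V : Type*} [Fintype V] (pQ : V → 𝓧 → ℝ) (hQ : IsPMF2 pQ) :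
    ∑ v, ∑ z, ∑ s, ∑ x, ∑ y, pQ v x * pS s * W x s (y, z) = 1 := by
  have hWyz : ∀ x s, ∑ y, ∑ z, W x s (y, z) = 1 := by
    intro x s
    rw [← (hW x s).2, Fintype.sum_prod_type]
  have inner : ∀ v, (∑ z, ∑ s, ∑ x, ∑ y, pQ v x * pS s * W x s (y, z)) = ∑ x, pQ v x := by
    intro v
    rw [sum_push4 (fun z s x y => pQ v x * pS s * W x s (y, z))]
    calc ∑ s, ∑ x, ∑ y, ∑ z, pQ v x * pS s * W x s (y, z)
        = ∑ s, ∑ x, pQ v x * pS s := by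
          apply Finset.sum_congr rfl; intro s _
          apply Finset.sum_congr rfl; intro x _
          rw [show (∑ y, ∑ z, pQ v x * pS s * W x s (y, z))
              = pQ v x * pS s * ∑ y, ∑ z, W x s (y, z) from by
            rw [Finset.mul_sum]
            exact Finset.sum_congr rfl fun y _ => (Finset.mul_sum _ _ _).symm]
          rw [hWyz, mul_one]
      _ = ∑ x, pQ v x := by
          rw [Finset.sum_comm]
          apply Finset.sum_congr rfl; intro x _
          rw [← Finset.mul_sum, hpS.2, mul_one]
  simp only [inner]
  exact hQ.2

end AuxRates

section Rates2

variable {U 𝓧 𝓢 𝓨 𝓩 : Type*} [Fintype U] [Fintype 𝓧] [Fintype 𝓢] [Fintype 𝓨] [Fintype 𝓩]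
variable (pS : 𝓢 → ℝ) (W : 𝓧 → 𝓢 → 𝓨 × 𝓩 → ℝ)

def pConst (pX : 𝓧 → ℝ) : Fin 1 → 𝓧 → ℝ := fun _ x => pX x

def pRev [DecidableEq 𝓧] (pUX : U → 𝓧 → ℝ) : U × 𝓧 → 𝓧 → ℝ :=
  fun p x => if x = p.2 then pUX p.1 p.2 else 0

lemma pConst_pmf (pX : 𝓧 → ℝ) (hpX : IsPMF pX) : IsPMF2 (pConst pX) :=
  ⟨fun _ x => hpX.1 x, by rw [Fintype.sum_unique]; exact hpX.2⟩

lemma pRev_pmf [DecidableEq 𝓧] (pUX : U → 𝓧 → ℝ) (hp : IsPMF2 pUX) : IsPMF2 (pRev pUX) := by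
  constructor
  · intro a x
    unfold pRev
    split
    · exact hp.1 a.1 a.2
    · exact le_refl 0
  · rw [Fintype.sum_prod_type]
    rw [← hp.2]
    apply Finset.sum_congr rfl; intro u _
    apply Finset.sum_congr rfl; intro x _
    unfold pRev
    simp

lemma pRev_marg [DecidableEq 𝓧] (pUX : U → 𝓧 → ℝ) (x : 𝓧) :
    ∑ a : U × 𝓧, pRev pUX a x = ∑ u, pUX u x := by
  rw [Fintype.sum_prod_type]
  apply Finset.sum_congr rfl; intro u _
  unfold pRev
  simp

lemma const_IUZ (pX : 𝓧 → ℝ) (hpX : IsPMF pX) (hpS : IsPMF pS) (hW : IsChan2 W) :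
    rateIUZ (pConst pX) pS W = 0 := by
  unfold rateIUZ
  apply MI_unique_left
  intro a
  have h := mass_UZ pS W hpS hW (pConst pX) (pConst_pmf pX hpX)
  rw [Fintype.sum_unique] at h
  rw [show a = default from Unique.eq_default a]
  exact h

lemma const_IUY (pX : 𝓧 → ℝ) (hpX : ∀ x, 0 ≤ pX x) (hpS : ∀ s, 0 ≤ pS s)
    (hW : IsChan2 W) : rateIUY_S (pConst pX) pS W = 0 := by
  unfold rateIUY_S
  apply CMI_subsingleton_a
  intro s u y
  apply Finset.sum_nonneg; intro x _
  apply mul_nonneg (mul_nonneg (hpX x) (hpS s))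
  apply Finset.sum_nonneg; intro z _
  exact (hW x s).1 (y, z)

lemma const_IXY (pX : 𝓧 → ℝ) :
    rateIXY_US (pConst pX) pS W = rateIXY_S pX pS W := by
  unfold rateIXY_US rateIXY_S pConst
  exact CMI_comp_c (fun s x y => pX x * pS s * ∑ z, W x s (y, z)) (Equiv.uniqueProd 𝓢 (Fin 1))

lemma rev_IXY [DecidableEq 𝓧] (pUX : U → 𝓧 → ℝ) (hp : ∀ u x, 0 ≤ pUX u x)
    (hpS : ∀ s, 0 ≤ pS s) (hW : IsChan2 W) : rateIXY_US (pRev pUX) pS W = 0 := by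
  unfold rateIXY_US
  refine CMI_determined _ ?_ (fun c => c.1.2) ?_
  · intro c x y
    refine mul_nonneg (mul_nonneg ?_ (hpS c.2)) ?_
    · unfold pRev; split
      · exact hp c.1.1 c.1.2
      · exact le_refl 0
    · exact Finset.sum_nonneg fun z _ => (hW x c.2).1 (y, z)
  · intro c x y hne
    unfold pRev
    rw [if_neg hne, zero_mul, zero_mul]

lemma rev_IUY [DecidableEq 𝓧] (pUX : U → 𝓧 → ℝ) (hp : ∀ u x, 0 ≤ pUX u x)
    (hpS : ∀ s, 0 ≤ pS s) (hW : IsChan2 W) :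
    rateIUY_S (pRev pUX) pS W = rateIXY_S (fun x => ∑ u, pUX u x) pS W := by
  have hgn : ∀ (s : 𝓢) (x : 𝓧) (y : 𝓨), 0 ≤ pS s * ∑ z, W x s (y, z) := fun s x y =>
    mul_nonneg (hpS s) (Finset.sum_nonneg fun z _ => (hW x s).1 (y, z))
  have hwn : ∀ a : U × 𝓧, 0 ≤ pUX a.1 a.2 := fun a => hp a.1 a.2
  have hfun : (fun (s : 𝓢) (a : U × 𝓧) (y : 𝓨) => ∑ x, pRev pUX a x * pS s * ∑ z, W x s (y, z))
      = fun s a y => pUX a.1 a.2 * (pS s * ∑ z, W a.2 s (y, z)) := by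
    funext s a y
    rw [Finset.sum_eq_single a.2]
    · unfold pRev; rw [if_pos rfl]; ring
    · intro x _ hne; unfold pRev; rw [if_neg hne, zero_mul, zero_mul]
    · intro h; exact absurd (Finset.mem_univ a.2) h
  have hfun2 : (fun (s : 𝓢) (x : 𝓧) (y : 𝓨) =>
        (∑ a' : U × 𝓧, if a'.2 = x then pUX a'.1 a'.2 else 0) * (pS s * ∑ z, W x s (y, z)))
      = fun s x y => (∑ u, pUX u x) * pS s * ∑ z, W x s (y, z) := by
    funext s x y
    rw [show (∑ a' : U × 𝓧, if a'.2 = x then pUX a'.1 a'.2 else 0) = ∑ u, pUX u x by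
      rw [Fintype.sum_prod_type]
      apply Finset.sum_congr rfl; intro u _
      rw [Finset.sum_ite_eq' Finset.univ x (fun x' => pUX u x')]
      simp]
    ring
  calc rateIUY_S (pRev pUX) pS W
      = CMI (fun s (a : U × 𝓧) y => pUX a.1 a.2 * (pS s * ∑ z, W a.2 s (y, z))) := by
        unfold rateIUY_S
        rw [hfun]
    _ = CMI (fun (s : 𝓢) (x : 𝓧) (y : 𝓨) =>
          (∑ a' : U × 𝓧, if a'.2 = x then pUX a'.1 a'.2 else 0) * (pS s * ∑ z, W x s (y, z))) :=
        CMI_fiber Prod.snd (fun a : U × 𝓧 => pUX a.1 a.2)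
          (fun s x y => pS s * ∑ z, W x s (y, z)) hwn hgn
    _ = rateIXY_S (fun x => ∑ u, pUX u x) pS W := by
        unfold rateIXY_S
        rw [hfun2]

lemma chainCR1 [DecidableEq 𝓧] (pUX : U → 𝓧 → ℝ) (hp : ∀ u x, 0 ≤ pUX u x)
    (hpS : ∀ s, 0 ≤ pS s) (hW : IsChan2 W) :
    rateIXY_S (fun x => ∑ u, pUX u x) pS W = rateIUY_S pUX pS W + rateIXY_US pUX pS W := by
  have hgn : ∀ (s : 𝓢) (x : 𝓧) (y : 𝓨), 0 ≤ pS s * ∑ z, W x s (y, z) := fun s x y =>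
    mul_nonneg (hpS s) (Finset.sum_nonneg fun z _ => (hW x s).1 (y, z))
  have hq : ∀ (s : 𝓢) (u : U) (x : 𝓧) (y : 𝓨), 0 ≤ pUX u x * (pS s * ∑ z, W x s (y, z)) :=
    fun s u x y => mul_nonneg (hp u x) (hgn s x y)
  have chain := CMI_chain_flat (fun s u x y => pUX u x * (pS s * ∑ z, W x s (y, z))) hq
  beta_reduce at chain
  have fib := CMI_fiber (Prod.snd : U × 𝓧 → 𝓧) (fun a : U × 𝓧 => pUX a.1 a.2)
    (fun s x y => pS s * ∑ z, W x s (y, z)) (fun a => hp a.1 a.2) hgn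
  beta_reduce at fib
  have hfun2 : (fun (s : 𝓢) (x : 𝓧) (y : 𝓨) =>
        (∑ a' : U × 𝓧, if a'.2 = x then pUX a'.1 a'.2 else 0) * (pS s * ∑ z, W x s (y, z)))
      = fun s x y => (∑ u, pUX u x) * pS s * ∑ z, W x s (y, z) := by
    funext s x y
    rw [show (∑ a' : U × 𝓧, if a'.2 = x then pUX a'.1 a'.2 else 0) = ∑ u, pUX u x by
      rw [Fintype.sum_prod_type]
      apply Finset.sum_congr rfl; intro u _
      rw [Finset.sum_ite_eq' Finset.univ x (fun x' => pUX u x')]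
      simp]
    ring
  have e2 : (fun (s : 𝓢) (u : U) (y : 𝓨) => ∑ x, pUX u x * (pS s * ∑ z, W x s (y, z)))
      = fun s u y => ∑ x, pUX u x * pS s * ∑ z, W x s (y, z) := by
    funext s u y
    apply Finset.sum_congr rfl; intro x _
    ring
  have e3 : CMI (fun (su : 𝓢 × U) (x : 𝓧) (y : 𝓨) =>
        pUX su.2 x * (pS su.1 * ∑ z, W x su.1 (y, z))) = rateIXY_US pUX pS W := by
    unfold rateIXY_US
    have e3' : (fun (su : 𝓢 × U) (x : 𝓧) (y : 𝓨) =>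
          pUX su.2 x * (pS su.1 * ∑ z, W x su.1 (y, z)))
        = fun su x y => (fun (us : U × 𝓢) (x : 𝓧) (y : 𝓨) =>
            pUX us.1 x * pS us.2 * ∑ z, W x us.2 (y, z)) (Equiv.prodComm 𝓢 U su) x y := by
      funext su x y
      simp only [Equiv.prodComm_apply, Prod.swap]
      ring
    rw [e3']
    exact CMI_comp_c (fun (us : U × 𝓢) (x : 𝓧) (y : 𝓨) =>
      pUX us.1 x * pS us.2 * ∑ z, W x us.2 (y, z)) (Equiv.prodComm 𝓢 U)
  calc rateIXY_S (fun x => ∑ u, pUX u x) pS W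
      = CMI (fun (s : 𝓢) (x : 𝓧) (y : 𝓨) =>
          (∑ a' : U × 𝓧, if a'.2 = x then pUX a'.1 a'.2 else 0) * (pS s * ∑ z, W x s (y, z))) := by
        unfold rateIXY_S
        rw [hfun2]
    _ = CMI (fun s (a : U × 𝓧) y => pUX a.1 a.2 * (pS s * ∑ z, W a.2 s (y, z))) := fib.symm
    _ = CMI (fun s (u : U) (y : 𝓨) => ∑ x, pUX u x * (pS s * ∑ z, W x s (y, z)))
        + CMI (fun (su : 𝓢 × U) (x : 𝓧) (y : 𝓨) =>
            pUX su.2 x * (pS su.1 * ∑ z, W x su.1 (y, z))) := chain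
    _ = rateIUY_S pUX pS W + rateIXY_US pUX pS W := by
        rw [e3]
        congr 1
        unfold rateIUY_S
        rw [e2]

lemma rev_IUZ_ge [DecidableEq 𝓧] (pUX : U → 𝓧 → ℝ) (hp : IsPMF2 pUX)
    (hpS : IsPMF pS) (hW : IsChan2 W) :
    rateIUZ pUX pS W ≤ rateIUZ (pRev pUX) pS W := by
  set K : U → 𝓧 → 𝓩 → ℝ := fun u x z => ∑ s, ∑ y, pUX u x * pS s * W x s (y, z) with hK
  have hKn : ∀ u x z, 0 ≤ K u x z := fun u x z =>
    Finset.sum_nonneg fun s _ => Finset.sum_nonneg fun y _ =>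
      mul_nonneg (mul_nonneg (hp.1 u x) (hpS.1 s)) ((hW x s).1 (y, z))
  have hptK : ∀ (a : U × 𝓧) (z : 𝓩),
      (∑ s, ∑ x, ∑ y, pRev pUX a x * pS s * W x s (y, z)) = K a.1 a.2 z := by
    intro a z
    rw [hK]
    apply Finset.sum_congr rfl; intro s _
    rw [Finset.sum_eq_single a.2]
    · unfold pRev; rw [if_pos rfl]
    · intro x _ hne; unfold pRev; rw [if_neg hne]
      simp
    · intro h; exact absurd (Finset.mem_univ a.2) h
  have hfunK : (fun (a : U × 𝓧) (z : 𝓩) => ∑ s, ∑ x, ∑ y, pRev pUX a x * pS s * W x s (y, z))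
      = fun a z => K a.1 a.2 z := by
    funext a z; exact hptK a z
  have hmassRev : ∑ a : U × 𝓧, ∑ z, K a.1 a.2 z = 1 := by
    have h := mass_UZ pS W hpS hW (pRev pUX) (pRev_pmf pUX hp)
    calc ∑ a : U × 𝓧, ∑ z, K a.1 a.2 z
        = ∑ a : U × 𝓧, ∑ z, ∑ s, ∑ x, ∑ y, pRev pUX a x * pS s * W x s (y, z) := by
          apply Finset.sum_congr rfl; intro a _
          apply Finset.sum_congr rfl; intro z _
          exact (hptK a z).symm
      _ = 1 := h
  have hptM : ∀ (u : U) (z : 𝓩),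
      (∑ x, K u x z) = ∑ s, ∑ x, ∑ y, pUX u x * pS s * W x s (y, z) := by
    intro u z
    rw [hK]
    exact Finset.sum_comm ..
  have hmassU : ∀ _u : Unit, True := fun _ => trivial
  have hmassUZ : ∑ u, ∑ z, ∑ x, K u x z = 1 := by
    have h := mass_UZ pS W hpS hW pUX hp
    calc ∑ u, ∑ z, ∑ x, K u x z
        = ∑ u, ∑ z, ∑ s, ∑ x, ∑ y, pUX u x * pS s * W x s (y, z) := by
          apply Finset.sum_congr rfl; intro u _
          apply Finset.sum_congr rfl; intro z _
          exact hptM u z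
      _ = 1 := h
  have a1 : rateIUZ (pRev pUX) pS W = MI (fun (a : U × 𝓧) z => K a.1 a.2 z) := by
    unfold rateIUZ
    rw [hfunK]
  have a2 : MI (fun (a : U × 𝓧) z => K a.1 a.2 z)
      = CMI (fun (_ : Unit) (a : U × 𝓧) z => K a.1 a.2 z) :=
    MI_eq_CMI_unit _ hmassRev
  have a3 := CMI_chain_flat (fun (_ : Unit) (u : U) (x : 𝓧) (z : 𝓩) => K u x z)
    (fun _ u x z => hKn u x z)
  beta_reduce at a3
  have a4 : CMI (fun (_ : Unit) (u : U) (z : 𝓩) => ∑ x, K u x z)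
      = MI (fun (u : U) (z : 𝓩) => ∑ x, K u x z) :=
    (MI_eq_CMI_unit _ hmassUZ).symm
  have a5 : MI (fun (u : U) (z : 𝓩) => ∑ x, K u x z) = rateIUZ pUX pS W := by
    unfold rateIUZ
    rw [show (fun (u : U) (z : 𝓩) => ∑ x, K u x z)
      = fun u z => ∑ s, ∑ x, ∑ y, pUX u x * pS s * W x s (y, z) from funext fun u =>
        funext fun z => hptM u z]
  have a6 : 0 ≤ CMI (fun (cu : Unit × U) (x : 𝓧) (z : 𝓩) => K cu.2 x z) :=
    CMI_nonneg _ (fun cu x z => hKn cu.2 x z)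
  rw [a1, a2]
  rw [a3]
  rw [a4, a5]
  linarith

def pMix {A B : Type*} (l : ℝ) (pA : A → 𝓧 → ℝ) (pB : B → 𝓧 → ℝ) : A ⊕ B → 𝓧 → ℝ :=
  fun ab x => Sum.elim (fun a => l * pA a x) (fun b => (1 - l) * pB b x) ab

lemma pull3 {S X Y : Type*} [Fintype S] [Fintype X] [Fintype Y] (l : ℝ) (F : S → X → Y → ℝ) :
    (∑ s, ∑ x, ∑ y, l * F s x y) = l * ∑ s, ∑ x, ∑ y, F s x y := by
  rw [Finset.mul_sum]
  apply Finset.sum_congr rfl; intro s _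
  rw [Finset.mul_sum]
  apply Finset.sum_congr rfl; intro x _
  rw [Finset.mul_sum]

lemma pMix_pmf {A B : Type*} [Fintype A] [Fintype B] (l : ℝ) (hl0 : 0 ≤ l) (hl1 : l ≤ 1)
    (pA : A → 𝓧 → ℝ) (pB : B → 𝓧 → ℝ) (hA : IsPMF2 pA) (hB : IsPMF2 pB) :
    IsPMF2 (pMix l pA pB) := by
  constructor
  · intro ab x
    cases ab with
    | inl a => exact mul_nonneg hl0 (hA.1 a x)
    | inr b => exact mul_nonneg (by linarith) (hB.1 b x)
  · rw [Fintype.sum_sum_type]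
    unfold pMix
    simp only [Sum.elim_inl, Sum.elim_inr]
    have e1 : (∑ a, ∑ x, l * pA a x) = l * ∑ a, ∑ x, pA a x := by
      rw [Finset.mul_sum]
      exact Finset.sum_congr rfl fun a _ => (Finset.mul_sum _ _ _).symm
    have e2 : (∑ b, ∑ x, (1 - l) * pB b x) = (1 - l) * ∑ b, ∑ x, pB b x := by
      rw [Finset.mul_sum]
      exact Finset.sum_congr rfl fun b _ => (Finset.mul_sum _ _ _).symm
    rw [e1, e2, hA.2, hB.2]
    ring

lemma pMix_marg {A B : Type*} [Fintype A] [Fintype B] (l : ℝ) (pA : A → 𝓧 → ℝ)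
    (pB : B → 𝓧 → ℝ) (pX0 : 𝓧 → ℝ) (hA : ∀ x, ∑ a, pA a x = pX0 x)
    (hB : ∀ x, ∑ b, pB b x = pX0 x) (x : 𝓧) :
    ∑ ab, pMix l pA pB ab x = pX0 x := by
  rw [Fintype.sum_sum_type]
  unfold pMix
  simp only [Sum.elim_inl, Sum.elim_inr]
  rw [← Finset.mul_sum, ← Finset.mul_sum, hA, hB]
  ring

lemma joint_colZ {V : Type*} [Fintype V] (pQ : V → 𝓧 → ℝ) (pX0 : 𝓧 → ℝ)
    (hQ : ∀ x, ∑ v, pQ v x = pX0 x) (z : 𝓩) :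
    ∑ v, ∑ s, ∑ x, ∑ y, pQ v x * pS s * W x s (y, z)
      = ∑ s, ∑ x, ∑ y, pX0 x * pS s * W x s (y, z) := by
  rw [sum_push4 (fun v s x y => pQ v x * pS s * W x s (y, z))]
  apply Finset.sum_congr rfl; intro s _
  apply Finset.sum_congr rfl; intro x _
  apply Finset.sum_congr rfl; intro y _
  rw [← Finset.sum_mul, ← Finset.sum_mul, hQ]

lemma joint_colY {V : Type*} [Fintype V] (pQ : V → 𝓧 → ℝ) (pX0 : 𝓧 → ℝ)
    (hQ : ∀ x, ∑ v, pQ v x = pX0 x) (s : 𝓢) (y : 𝓨) :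
    ∑ v, ∑ x, pQ v x * pS s * ∑ z, W x s (y, z)
      = ∑ x, pX0 x * pS s * ∑ z, W x s (y, z) := by
  rw [Finset.sum_comm]
  apply Finset.sum_congr rfl; intro x _
  rw [← Finset.sum_mul, ← Finset.sum_mul, hQ]

lemma mix_IUZ {A B : Type*} [Fintype A] [Fintype B] (l : ℝ) (hl0 : 0 ≤ l) (hl1 : l ≤ 1)
    (pA : A → 𝓧 → ℝ) (pB : B → 𝓧 → ℝ) (pX0 : 𝓧 → ℝ)
    (hA : ∀ x, ∑ a, pA a x = pX0 x) (hB : ∀ x, ∑ b, pB b x = pX0 x) :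
    rateIUZ (pMix l pA pB) pS W = l * rateIUZ pA pS W + (1 - l) * rateIUZ pB pS W := by
  unfold rateIUZ
  have hsh : (fun (ab : A ⊕ B) (z : 𝓩) => ∑ s, ∑ x, ∑ y, pMix l pA pB ab x * pS s * W x s (y, z))
      = fun ab z => Sum.elim
        (fun a => l * ∑ s, ∑ x, ∑ y, pA a x * pS s * W x s (y, z))
        (fun b => (1 - l) * ∑ s, ∑ x, ∑ y, pB b x * pS s * W x s (y, z)) ab := by
    funext ab z
    cases ab with
    | inl a =>
      simp only [pMix, Sum.elim_inl]
      rw [← pull3 l (fun s x y => pA a x * pS s * W x s (y, z))]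
      apply Finset.sum_congr rfl; intro s _
      apply Finset.sum_congr rfl; intro x _
      apply Finset.sum_congr rfl; intro y _
      ring
    | inr b =>
      simp only [pMix, Sum.elim_inr]
      rw [← pull3 (1 - l) (fun s x y => pB b x * pS s * W x s (y, z))]
      apply Finset.sum_congr rfl; intro s _
      apply Finset.sum_congr rfl; intro x _
      apply Finset.sum_congr rfl; intro y _
      ring
  rw [hsh]
  exact MI_mix _ _ l hl0 hl1 (fun z => by
    rw [joint_colZ pS W pA pX0 hA z, joint_colZ pS W pB pX0 hB z])

lemma mix_IUY {A B : Type*} [Fintype A] [Fintype B] (l : ℝ) (hl0 : 0 ≤ l) (hl1 : l ≤ 1)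
    (pA : A → 𝓧 → ℝ) (pB : B → 𝓧 → ℝ) (pX0 : 𝓧 → ℝ)
    (hA : ∀ x, ∑ a, pA a x = pX0 x) (hB : ∀ x, ∑ b, pB b x = pX0 x) :
    rateIUY_S (pMix l pA pB) pS W = l * rateIUY_S pA pS W + (1 - l) * rateIUY_S pB pS W := by
  unfold rateIUY_S
  have hsh : (fun (s : 𝓢) (ab : A ⊕ B) (y : 𝓨) =>
        ∑ x, pMix l pA pB ab x * pS s * ∑ z, W x s (y, z))
      = fun s ab y => Sum.elim
        (fun a => l * ∑ x, pA a x * pS s * ∑ z, W x s (y, z))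
        (fun b => (1 - l) * ∑ x, pB b x * pS s * ∑ z, W x s (y, z)) ab := by
    funext s ab y
    cases ab with
    | inl a =>
      simp only [pMix, Sum.elim_inl]
      rw [Finset.mul_sum]
      apply Finset.sum_congr rfl; intro x _
      ring
    | inr b =>
      simp only [pMix, Sum.elim_inr]
      rw [Finset.mul_sum]
      apply Finset.sum_congr rfl; intro x _
      ring
  rw [hsh]
  exact CMI_mix_a _ _ l hl0 hl1 (fun s y => by
    rw [joint_colY pS W pA pX0 hA s y, joint_colY pS W pB pX0 hB s y])

lemma mix_IXY {A B : Type*} [Fintype A] [Fintype B] (l : ℝ) (hl0 : 0 ≤ l) (hl1 : l ≤ 1)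
    (pA : A → 𝓧 → ℝ) (pB : B → 𝓧 → ℝ) :
    rateIXY_US (pMix l pA pB) pS W = l * rateIXY_US pA pS W + (1 - l) * rateIXY_US pB pS W := by
  unfold rateIXY_US
  calc CMI (fun (c : (A ⊕ B) × 𝓢) (x : 𝓧) (y : 𝓨) =>
        pMix l pA pB c.1 x * pS c.2 * ∑ z, W x c.2 (y, z))
      = CMI (fun (c' : (A × 𝓢) ⊕ (B × 𝓢)) (x : 𝓧) (y : 𝓨) =>
          pMix l pA pB ((Equiv.sumProdDistrib A B 𝓢).symm c').1 x *
            pS ((Equiv.sumProdDistrib A B 𝓢).symm c').2 *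
            ∑ z, W x ((Equiv.sumProdDistrib A B 𝓢).symm c').2 (y, z)) :=
        (CMI_comp_c (fun (c : (A ⊕ B) × 𝓢) (x : 𝓧) (y : 𝓨) =>
          pMix l pA pB c.1 x * pS c.2 * ∑ z, W x c.2 (y, z))
          ((Equiv.sumProdDistrib A B 𝓢).symm)).symm
    _ = l * CMI (fun (us : A × 𝓢) (x : 𝓧) (y : 𝓨) => pA us.1 x * pS us.2 * ∑ z, W x us.2 (y, z))
        + (1 - l) * CMI (fun (us : B × 𝓢) (x : 𝓧) (y : 𝓨) =>
            pB us.1 x * pS us.2 * ∑ z, W x us.2 (y, z)) := by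
        rw [CMI_sum_c]
        congr 1
        · rw [show (fun (cs : A × 𝓢) (x : 𝓧) (y : 𝓨) =>
              pMix l pA pB ((Equiv.sumProdDistrib A B 𝓢).symm (Sum.inl cs)).1 x *
                pS ((Equiv.sumProdDistrib A B 𝓢).symm (Sum.inl cs)).2 *
                ∑ z, W x ((Equiv.sumProdDistrib A B 𝓢).symm (Sum.inl cs)).2 (y, z))
            = fun cs x y => l * (pA cs.1 x * pS cs.2 * ∑ z, W x cs.2 (y, z)) from by
            funext cs x y
            simp only [Equiv.sumProdDistrib, Equiv.coe_fn_symm_mk, pMix, Prod.map_fst, Prod.map_snd, id_eq, Sum.elim_inl]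
            ring]
          exact CMI_smul _ l hl0
        · rw [show (fun (ds : B × 𝓢) (x : 𝓧) (y : 𝓨) =>
              pMix l pA pB ((Equiv.sumProdDistrib A B 𝓢).symm (Sum.inr ds)).1 x *
                pS ((Equiv.sumProdDistrib A B 𝓢).symm (Sum.inr ds)).2 *
                ∑ z, W x ((Equiv.sumProdDistrib A B 𝓢).symm (Sum.inr ds)).2 (y, z))
            = fun ds x y => (1 - l) * (pB ds.1 x * pS ds.2 * ∑ z, W x ds.2 (y, z)) from by
            funext ds x y
            simp only [Equiv.sumProdDistrib, Equiv.coe_fn_symm_mk, pMix, Prod.map_fst, Prod.map_snd, id_eq, Sum.elim_inr]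
            ring]
          exact CMI_smul _ (1 - l) (by linarith)

lemma toFin {V : Type*} [Fintype V] (pQ : V → 𝓧 → ℝ) (hQ : IsPMF2 pQ) :
    ∃ (k : ℕ) (p' : Fin k → 𝓧 → ℝ), IsPMF2 p' ∧
      rateIUZ p' pS W = rateIUZ pQ pS W ∧
      rateIXY_US p' pS W = rateIXY_US pQ pS W ∧
      rateIUY_S p' pS W = rateIUY_S pQ pS W ∧
      ∀ x, (∑ i, p' i x) = ∑ v, pQ v x := by
  refine ⟨Fintype.card V, fun i x => pQ ((Fintype.equivFin V).symm i) x, ⟨?_, ?_⟩, ?_, ?_, ?_, ?_⟩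
  · intro i x; exact hQ.1 _ x
  · rw [← hQ.2]
    exact Equiv.sum_comp (Fintype.equivFin V).symm (fun v => ∑ x, pQ v x)
  · unfold rateIUZ
    exact MI_comp_left (fun v z => ∑ s, ∑ x, ∑ y, pQ v x * pS s * W x s (y, z))
      ((Fintype.equivFin V).symm)
  · unfold rateIXY_US
    exact CMI_comp_c (fun (us : V × 𝓢) x y => pQ us.1 x * pS us.2 * ∑ z, W x us.2 (y, z))
      (((Fintype.equivFin V).symm).prodCongr (Equiv.refl 𝓢))
  · unfold rateIUY_S
    exact CMI_comp_a (fun s v y => ∑ x, pQ v x * pS s * ∑ z, W x s (y, z))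
      ((Fintype.equivFin V).symm)
  · intro x
    exact Equiv.sum_comp (Fintype.equivFin V).symm (fun v => pQ v x)

end Rates2

set_option maxHeartbeats 2000000 in
/-- **Equivalence of three rate regions** (`𝒜 = ℬ = 𝒞`), where the unions are over
all finite auxiliary alphabets `𝒰` and pmfs `P_{UX}`, and rate pairs are restricted
to `R0, R1 ≥ 0`. -/
theorem region_equivalence
    {𝓧 𝓢 𝓨 𝓩 : Type*} [Fintype 𝓧] [Fintype 𝓢] [Fintype 𝓨] [Fintype 𝓩]
    (pS : 𝓢 → ℝ) (hpS : IsPMF pS)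
    (W : 𝓧 → 𝓢 → 𝓨 × 𝓩 → ℝ) (hW : IsChan2 W) :
    ({r : ℝ × ℝ | 0 ≤ r.1 ∧ 0 ≤ r.2 ∧ ∃ (k : ℕ) (pUX : Fin k → 𝓧 → ℝ), IsPMF2 pUX ∧
        r.1 ≤ rateIUZ pUX pS W ∧
        r.2 ≤ rateIXY_US pUX pS W ∧
        r.1 + r.2 ≤ rateIXY_S (fun x => ∑ u, pUX u x) pS W} =
      {r : ℝ × ℝ | 0 ≤ r.1 ∧ 0 ≤ r.2 ∧ ∃ (k : ℕ) (pUX : Fin k → 𝓧 → ℝ), IsPMF2 pUX ∧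
        r.1 ≤ rateIUZ pUX pS W ∧
        r.1 + r.2 ≤ rateIXY_US pUX pS W + rateIUZ pUX pS W ∧
        r.1 + r.2 ≤ rateIXY_S (fun x => ∑ u, pUX u x) pS W}) ∧
    ({r : ℝ × ℝ | 0 ≤ r.1 ∧ 0 ≤ r.2 ∧ ∃ (k : ℕ) (pUX : Fin k → 𝓧 → ℝ), IsPMF2 pUX ∧
        r.1 ≤ rateIUZ pUX pS W ∧
        r.1 + r.2 ≤ rateIXY_US pUX pS W + rateIUZ pUX pS W ∧
        r.1 + r.2 ≤ rateIXY_S (fun x => ∑ u, pUX u x) pS W} =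
      {r : ℝ × ℝ | 0 ≤ r.1 ∧ 0 ≤ r.2 ∧ ∃ (k : ℕ) (pUX : Fin k → 𝓧 → ℝ), IsPMF2 pUX ∧
        r.1 ≤ min (rateIUZ pUX pS W) (rateIUY_S pUX pS W) ∧
        r.2 ≤ rateIXY_US pUX pS W}) := by
  classical
  have hpXpmf : ∀ (k : ℕ) (p : Fin k → 𝓧 → ℝ), IsPMF2 p → IsPMF (fun x => ∑ u, p u x) := by
    intro k p hp
    refine ⟨fun x => Finset.sum_nonneg fun u _ => hp.1 u x, ?_⟩
    rw [← hp.2]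
    exact Finset.sum_comm ..
  have hJnn : ∀ (k : ℕ) (p : Fin k → 𝓧 → ℝ), IsPMF2 p → 0 ≤ rateIUY_S p pS W := by
    intro k p hp
    unfold rateIUY_S
    apply CMI_nonneg
    intro s u y
    exact Finset.sum_nonneg fun x _ => mul_nonneg (mul_nonneg (hp.1 u x) (hpS.1 s))
      (Finset.sum_nonneg fun z _ => (hW x s).1 (y, z))
  constructor
  · -- 𝒜 = ℬ
    ext r
    simp only [Set.mem_setOf_eq]
    constructor
    · rintro ⟨h0, h1, k, p, hp, hA1, hA2, hA3⟩
      exact ⟨h0, h1, k, p, hp, hA1, by linarith, hA3⟩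
    · rintro ⟨h0, h1, k, p, hp, hB1, hB2, hB3⟩
      refine ⟨h0, h1, ?_⟩
      have hpX := hpXpmf k p hp
      by_cases hR0 : r.1 = 0
      · refine ⟨1, pConst (fun x => ∑ u, p u x), pConst_pmf _ hpX, ?_, ?_, ?_⟩
        · rw [const_IUZ pS W _ hpX hpS hW, hR0]
        · rw [const_IXY pS W]
          linarith
        · rw [show (fun x => ∑ i : Fin 1, pConst (fun x' => ∑ u, p u x') i x)
            = fun x => ∑ u, p u x from funext fun x => Fintype.sum_unique _]
          exact hB3
      · have hR0pos : 0 < r.1 := lt_of_le_of_ne h0 (Ne.symm hR0)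
        have hZpos : 0 < rateIUZ p pS W := lt_of_lt_of_le hR0pos hB1
        set l := r.1 / rateIUZ p pS W with hldef
        have hl0 : 0 ≤ l := div_nonneg h0 hZpos.le
        have hl1 : l ≤ 1 := (div_le_one hZpos).2 hB1
        have hlZ : l * rateIUZ p pS W = r.1 := div_mul_cancel₀ _ (ne_of_gt hZpos)
        have hBmarg : ∀ x, ∑ i : Fin 1, pConst (fun x' => ∑ u, p u x') i x = ∑ u, p u x :=
          fun x => Fintype.sum_unique _
        have hAmarg : ∀ x, ∑ u, p u x = ∑ u, p u x := fun x => rfl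
        obtain ⟨k', p', hp', hZ', hXY', hUY', hm'⟩ := toFin pS W
          (pMix l p (pConst (fun x => ∑ u, p u x)))
          (pMix_pmf l hl0 hl1 p _ hp (pConst_pmf _ hpX))
        refine ⟨k', p', hp', ?_, ?_, ?_⟩
        · rw [hZ', mix_IUZ pS W l hl0 hl1 p _ (fun x => ∑ u, p u x) hAmarg hBmarg,
            const_IUZ pS W _ hpX hpS hW, mul_zero, add_zero, hlZ]
        · rw [hXY', mix_IXY pS W l hl0 hl1 p _, const_IXY pS W]
          have t1 : 0 ≤ l * ((rateIXY_US p pS W + rateIUZ p pS W) - (r.1 + r.2)) :=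
            mul_nonneg hl0 (by linarith)
          have t2 : 0 ≤ (1 - l) * (rateIXY_S (fun x => ∑ u, p u x) pS W - (r.1 + r.2)) :=
            mul_nonneg (by linarith) (by linarith)
          nlinarith [t1, t2, hlZ]
        · rw [show (fun x => ∑ i, p' i x) = fun x => ∑ u, p u x from funext fun x => by
            rw [hm' x, pMix_marg l p _ (fun x' => ∑ u, p u x') hAmarg hBmarg x]]
          exact hB3
  · -- ℬ = 𝒞
    ext r
    simp only [Set.mem_setOf_eq]
    constructor
    · rintro ⟨h0, h1, k, p, hp, hB1, hB2, hB3⟩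
      refine ⟨h0, h1, ?_⟩
      have hpX := hpXpmf k p hp
      have hcr : rateIXY_S (fun x => ∑ u, p u x) pS W
          = rateIUY_S p pS W + rateIXY_US p pS W := chainCR1 pS W p hp.1 hpS.1 hW
      have hJ0 : 0 ≤ rateIUY_S p pS W := hJnn k p hp
      by_cases hR0 : r.1 = 0
      · refine ⟨1, pConst (fun x => ∑ u, p u x), pConst_pmf _ hpX, ?_, ?_⟩
        · rw [const_IUZ pS W _ hpX hpS hW, const_IUY pS W _ hpX.1 hpS.1 hW, min_self, hR0]
        · rw [const_IXY pS W]
          linarith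
      · have hR0pos : 0 < r.1 := lt_of_le_of_ne h0 (Ne.symm hR0)
        have hZpos : 0 < rateIUZ p pS W := lt_of_lt_of_le hR0pos hB1
        by_cases hRJ : r.1 ≤ rateIUY_S p pS W
        · -- case (ii) : mix with constant, l = r.1 / min
          have hJpos : 0 < rateIUY_S p pS W := lt_of_lt_of_le hR0pos hRJ
          set m := min (rateIUZ p pS W) (rateIUY_S p pS W) with hmdef
          have hmpos : 0 < m := lt_min hZpos hJpos
          have hrm : r.1 ≤ m := le_min hB1 hRJ
          set l := r.1 / m with hldef
          have hl0 : 0 ≤ l := div_nonneg h0 hmpos.le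
          have hl1 : l ≤ 1 := (div_le_one hmpos).2 hrm
          have hlm : l * m = r.1 := div_mul_cancel₀ _ (ne_of_gt hmpos)
          have hBmarg : ∀ x, ∑ i : Fin 1, pConst (fun x' => ∑ u, p u x') i x = ∑ u, p u x :=
            fun x => Fintype.sum_unique _
          have hAmarg : ∀ x, ∑ u, p u x = ∑ u, p u x := fun x => rfl
          obtain ⟨k', p', hp', hZ', hXY', hUY', hm'⟩ := toFin pS W
            (pMix l p (pConst (fun x => ∑ u, p u x)))
            (pMix_pmf l hl0 hl1 p _ hp (pConst_pmf _ hpX))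
          refine ⟨k', p', hp', ?_, ?_⟩
          · rw [hZ', hUY', mix_IUZ pS W l hl0 hl1 p _ (fun x => ∑ u, p u x) hAmarg hBmarg,
              mix_IUY pS W l hl0 hl1 p _ (fun x => ∑ u, p u x) hAmarg hBmarg,
              const_IUZ pS W _ hpX hpS hW, const_IUY pS W _ hpX.1 hpS.1 hW]
            simp only [mul_zero, add_zero]
            apply le_min
            · have : l * m ≤ l * rateIUZ p pS W :=
                mul_le_mul_of_nonneg_left (min_le_left _ _) hl0
              linarith [hlm]
            · have : l * m ≤ l * rateIUY_S p pS W :=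
                mul_le_mul_of_nonneg_left (min_le_right _ _) hl0
              linarith [hlm]
          · rw [hXY', mix_IXY pS W l hl0 hl1 p _, const_IXY pS W]
            have t4 : l * rateIXY_S (fun x => ∑ u, p u x) pS W
                = l * rateIUY_S p pS W + l * rateIXY_US p pS W := by
              rw [hcr]; ring
            rcases le_total (rateIUZ p pS W) (rateIUY_S p pS W) with hc | hc
            · -- m = IUZ
              have hmeq : m = rateIUZ p pS W := min_eq_left hc
              have t3 : l * (rateIUY_S p pS W - rateIUZ p pS W)
                  ≤ rateIUY_S p pS W - rateIUZ p pS W := by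
                nlinarith [mul_le_mul_of_nonneg_right hl1 (by linarith : (0:ℝ) ≤ rateIUY_S p pS W - rateIUZ p pS W)]
              have hlZ : l * rateIUZ p pS W = r.1 := by rw [← hmeq]; exact hlm
              nlinarith [t3, t4, hlZ, hB2, hcr]
            · -- m = J
              have hmeq : m = rateIUY_S p pS W := min_eq_right hc
              have hlJ : l * rateIUY_S p pS W = r.1 := by rw [← hmeq]; exact hlm
              nlinarith [t4, hlJ, hB3, hcr]
        · -- case (iii) : mix pRev with p
          push_neg at hRJ
          have hI1pos : 0 < rateIXY_US p pS W := by linarith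
          set a := (r.1 - rateIUY_S p pS W) / rateIXY_US p pS W with hadef
          have ha0 : 0 ≤ a := div_nonneg (by linarith) hI1pos.le
          have ha1 : a ≤ 1 := (div_le_one hI1pos).2 (by linarith)
          have haI : a * rateIXY_US p pS W = r.1 - rateIUY_S p pS W :=
            div_mul_cancel₀ _ (ne_of_gt hI1pos)
          have hRmarg : ∀ x, ∑ v : Fin k × 𝓧, pRev p v x = ∑ u, p u x :=
            fun x => pRev_marg p x
          have hAmarg : ∀ x, ∑ u, p u x = ∑ u, p u x := fun x => rfl
          obtain ⟨k', p', hp', hZ', hXY', hUY', hm'⟩ := toFin pS W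
            (pMix a (pRev p) p)
            (pMix_pmf a ha0 ha1 (pRev p) p (pRev_pmf p hp) hp)
          have hrevZ := rev_IUZ_ge pS W p hp hpS hW
          have hrevY := rev_IUY pS W p hp.1 hpS.1 hW
          have hrevXY := rev_IXY pS W p hp.1 hpS.1 hW
          refine ⟨k', p', hp', ?_, ?_⟩
          · rw [hZ', hUY']
            rw [mix_IUZ pS W a ha0 ha1 (pRev p) p (fun x => ∑ u, p u x) hRmarg hAmarg]
            rw [mix_IUY pS W a ha0 ha1 (pRev p) p (fun x => ∑ u, p u x) hRmarg hAmarg]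
            rw [hrevY]
            apply le_min
            · have t5 : a * rateIUZ p pS W ≤ a * rateIUZ (pRev p) pS W :=
                mul_le_mul_of_nonneg_left hrevZ ha0
              nlinarith [t5, hB1]
            · have t6 : a * rateIXY_S (fun x => ∑ u, p u x) pS W
                  = a * rateIUY_S p pS W + a * rateIXY_US p pS W := by rw [hcr]; ring
              nlinarith [t6, haI]
          · rw [hXY', mix_IXY pS W a ha0 ha1 (pRev p) p, hrevXY]
            nlinarith [haI, hB3, hcr]
    · rintro ⟨h0, h1, k, p, hp, hC1, hC2⟩
      have hcr : rateIXY_S (fun x => ∑ u, p u x) pS W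
          = rateIUY_S p pS W + rateIXY_US p pS W := chainCR1 pS W p hp.1 hpS.1 hW
      refine ⟨h0, h1, k, p, hp, le_trans hC1 (min_le_left _ _), ?_, ?_⟩
      · have := le_trans hC1 (min_le_left _ _)
        linarith
      · have := le_trans hC1 (min_le_right _ _)
        linarith

end
end
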